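/- arXiv:1006.1444 — 5 statements merged into one kernel-verified Lean document; each statement's English description precedes it below -/
import Mathlib

section
/- Let $M$ be a finitely generated $\mathbb{Z}^n$-graded module over $R = k[x_1,\ldots,x_n]$ with a Stanley decomposition $\mathcal{S}$ such that for every pair $(m,G) \in \mathcal{S}$, the vector $(\deg m)^+$ is square-free and $G = \{x_i : i \in \mathrm{supp}((\deg m)^+)\}$. Then the pairs of $\mathcal{S}$ can be ordered so that $\mathcal{S}$ becomes a Stanley filtration of $M$: writing $\mathcal{S} = \{(m_1,G_1),\ldots,(m_p,G_p)\}$ with $|\deg m_1| \ge \cdots \ge |\deg m_p|$ (total degrees), for each $j=1,\ldots,p$ one has $(\sum_{i=1}^j R m_i)/(\sum_{i=1}^{j-1} R m_i) \cong k[G_j](-\deg m_j)$ as $R$-modules. -/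
/-!
Common definitions: `ℤⁿ`-graded modules over `R = k[x_1, …, x_n]`, Stanley
decompositions, the Čech complex on `x_1, …, x_n` (computing local cohomology
`H^i_𝔪` and, via the standard characterization, Castelnuovo–Mumford regularity),
and `Ext^i_R(R/I, ω_R)` for a monomial ideal `I`, computed with its natural
`ℤⁿ`-grading from the Taylor complex, which is a graded free resolution of `R/I`
on a chosen set of monomial generators of `I`.
-/

open MvPolynomial

namespace Paper

variable {k : Type} [Field k] {n : ℕ}

/-- The unit vector `e j` in `ℤⁿ`. -/
def eZ (n : ℕ) (j : Fin n) : Fin n → ℤ := fun i => if i = j then 1 else 0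

section Stanley

variable (k n)
variable (M : Type) [AddCommGroup M] [Module (MvPolynomial (Fin n) k) M]
  [Module k M] [IsScalarTower k (MvPolynomial (Fin n) k) M]

/-- The `k`-subspace `k[G]m` of `M` spanned by all `u • m`, `u` a monomial in the
variables of `G`. -/
def stanleySpan (m : M) (G : Set (Fin n)) : Submodule k M :=
  Submodule.span k
    {x | ∃ u : Fin n →₀ ℕ, ↑u.support ⊆ G ∧ x = (monomial u (1 : k) : MvPolynomial (Fin n) k) • m}

/-- `k[G]m` is a Stanley space: no monomial in the variables of `G` kills `m`. -/
def IsStanleySpace (m : M) (G : Set (Fin n)) : Prop :=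
  ∀ u : Fin n →₀ ℕ, ↑u.support ⊆ G → (monomial u (1 : k) : MvPolynomial (Fin n) k) • m ≠ 0

/-- A Stanley decomposition of `M`: finitely many pairs `(m i, G i)` such that each
`k[G i](m i)` is a Stanley space and `M = ⊕ᵢ k[G i](m i)` as `k`-vector spaces. -/
def IsStanleyDecomposition {p : ℕ} (m : Fin p → M) (G : Fin p → Set (Fin n)) : Prop :=
  (∀ i, IsStanleySpace k n M (m i) (G i)) ∧
    DirectSum.IsInternal (fun i : Fin p => stanleySpan k n M (m i) (G i))

end Stanley

section PartialSpan

variable (k n)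

/-- `M⁽ʲ⁾ = R m_1 + ⋯ + R m_j`, the `R`-submodule generated by the first `j`
elements of the family `m`. -/
noncomputable def partialSpan (M : Type) [AddCommGroup M] [Module (MvPolynomial (Fin n) k) M]
    {p : ℕ} (m : Fin p → M) (j : ℕ) : Submodule (MvPolynomial (Fin n) k) M :=
  Submodule.span (MvPolynomial (Fin n) k) (m '' {i : Fin p | (i : ℕ) < j})

end PartialSpan

section Cech

variable (k n)

/-- The multiplicative set generated by the variables `x i`, `i ∈ Λ`. -/
noncomputable def varSubmonoid (Λ : Finset (Fin n)) : Submonoid (MvPolynomial (Fin n) k) :=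
  Submonoid.closure ((fun i => (X i : MvPolynomial (Fin n) k)) '' ↑Λ)

lemma varSubmonoid_mono {Λ Λ' : Finset (Fin n)} (h : Λ ⊆ Λ') :
    varSubmonoid k n Λ ≤ varSubmonoid k n Λ' :=
  Submonoid.closure_mono (Set.image_mono (by exact_mod_cast h))

variable (M : Type) [AddCommGroup M] [Module (MvPolynomial (Fin n) k) M]

/-- The localization `M_{x_Λ}` of `M` inverting the variables in `Λ`. -/
abbrev LocM (Λ : Finset (Fin n)) : Type := LocalizedModule (varSubmonoid k n Λ) M

/-- The canonical map `M_{x_Λ} → M_{x_Λ'}` for `Λ ⊆ Λ'`. -/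
noncomputable def locMap {Λ Λ' : Finset (Fin n)} (h : Λ ⊆ Λ') :
    LocM k n M Λ →ₗ[MvPolynomial (Fin n) k] LocM k n M Λ' :=
  LocalizedModule.lift _ (LocalizedModule.mkLinearMap (varSubmonoid k n Λ') M)
    (fun s => IsLocalizedModule.map_units (LocalizedModule.mkLinearMap (varSubmonoid k n Λ') M)
      ⟨(s : MvPolynomial (Fin n) k), varSubmonoid_mono k n h s.2⟩)

/-- The `j`-th term `Čʲ(M) = ⊕_{|Λ| = j} M_{x_Λ}` of the Čech complex of `M` on the
variables `x 1, …, x n`. -/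
abbrev CechTerm (j : ℕ) : Type :=
  ∀ Λ : {S : Finset (Fin n) // S.card = j}, LocM k n M Λ.1

/-- The Čech differential, an alternating sum of localization maps. -/
noncomputable def cechD (j : ℕ) :
    CechTerm k n M j →ₗ[MvPolynomial (Fin n) k] CechTerm k n M (j + 1) :=
  LinearMap.pi fun Λ' : {S : Finset (Fin n) // S.card = j + 1} =>
    ∑ l ∈ Λ'.1.attach,
      ((-1 : ℤ) ^ ((Λ'.1.filter (fun x => x < l.1)).card)) •
        ((locMap k n M (Finset.erase_subset l.1 Λ'.1)).comp
          (LinearMap.proj (⟨Λ'.1.erase l.1, by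
            rw [Finset.card_erase_of_mem l.2, Λ'.2]; rfl⟩ :
              {S : Finset (Fin n) // S.card = j})))

/-- The coboundaries in cohomological degree `i` of the Čech complex of `M`. -/
noncomputable def cechB : (i : ℕ) → Submodule (MvPolynomial (Fin n) k) (CechTerm k n M i)
  | 0 => ⊥
  | (s + 1) => LinearMap.range (cechD k n M s)

/-- The `j`-th term of the restricted Čech subcomplex `Č_F`: only the direct summands
`M_{x_Λ}` with `F ⊆ Λ` occur (in particular it vanishes for `j < |F|`). -/
def cechSub (F : Finset (Fin n)) (j : ℕ) :
    Submodule (MvPolynomial (Fin n) k) (CechTerm k n M j) where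
  carrier := {c | ∀ Λ, ¬ F ⊆ Λ.1 → c Λ = 0}
  add_mem' := fun h1 h2 Λ h => by
    have := h1 Λ h; have := h2 Λ h
    simp_all
  zero_mem' := fun Λ h => rfl
  smul_mem' := fun r c hc Λ h => by
    have := hc Λ h
    simp_all

/-- The coboundaries of the restricted subcomplex `Č_F` in cohomological degree `i`. -/
noncomputable def cechBF (F : Finset (Fin n)) :
    (i : ℕ) → Submodule (MvPolynomial (Fin n) k) (CechTerm k n M i)
  | 0 => ⊥
  | (s + 1) => Submodule.map (cechD k n M s) (cechSub k n M F s)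

end Cech

section CechGraded

variable (k n)
variable (M : Type) [AddCommGroup M] [Module (MvPolynomial (Fin n) k) M]
variable (gr : (Fin n → ℤ) → Set M)

/-- The multidegree `a` component (for the `ℤⁿ`-grading of `M` given by `gr`) of the
localization `M_{x_Λ}`: generated by fractions `m / xˢ` where `m` is homogeneous of
multidegree `b`, `xˢ` is a monomial in the variables of `Λ` and `b - s = a`. -/
noncomputable def locPiece (Λ : Finset (Fin n)) (a : Fin n → ℤ) :
    AddSubgroup (LocM k n M Λ) :=
  AddSubgroup.closure
    {y | ∃ (m : M) (b : Fin n → ℤ) (s : Fin n →₀ ℕ)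
        (hs : (monomial s (1 : k) : MvPolynomial (Fin n) k) ∈ varSubmonoid k n Λ),
          m ∈ gr b ∧ (∀ i, b i - (s i : ℤ) = a i) ∧
            y = LocalizedModule.mk m ⟨monomial s (1 : k), hs⟩}

/-- The multidegree `a` component of the `j`-th term of the Čech complex of `M`. -/
noncomputable def cechPiece (j : ℕ) (a : Fin n → ℤ) : Set (CechTerm k n M j) :=
  {c | ∀ Λ, c Λ ∈ locPiece k n M gr Λ.1 a}

/-- The total degree `t` component of the `j`-th term of the Čech complex of `M`. -/
noncomputable def cechPieceTot (j : ℕ) (t : ℤ) : AddSubgroup (CechTerm k n M j) :=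
  ⨆ (a : Fin n → ℤ) (_ : (∑ i, a i) = t), AddSubgroup.closure (cechPiece k n M gr j a)

/-- `regLE k n M gr c` says that the Castelnuovo–Mumford regularity of the graded
module `M` (with respect to the total degree `ℤ`-grading) is at most `c`; by the
standard local cohomology characterization of regularity,
`reg M = max {i + t : Hⁱ_𝔪(M)_t ≠ 0}`, where `Hⁱ_𝔪(M)` is the cohomology of the
Čech complex of `M` on `x 1, …, x n`. -/
noncomputable def regLE (c : ℤ) : Prop :=
  ∀ (i : ℕ) (t : ℤ) (z : CechTerm k n M i),
    z ∈ LinearMap.ker (cechD k n M i) → z ∈ cechPieceTot k n M gr i t →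
      z ∉ cechB k n M i → (i : ℤ) + t ≤ c

end CechGraded

section Pieces

variable (k n)

/-- The set of homogeneous polynomials of multidegree `a ∈ ℤⁿ`
(empty if some `a i < 0`). -/
def RPieceSet (a : Fin n → ℤ) : Set (MvPolynomial (Fin n) k) :=
  {g | ∃ (c : k) (s : Fin n →₀ ℕ), (∀ i, (s i : ℤ) = a i) ∧ g = monomial s c}

/-- The multidegree `a` component of the polynomial ring, as a `k`-subspace. -/
noncomputable def RPiece (a : Fin n → ℤ) : Submodule k (MvPolynomial (Fin n) k) :=
  Submodule.span k (RPieceSet k n a)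

/-- A monomial ideal: an ideal generated by monomials. -/
def IsMonomialIdeal (I : Ideal (MvPolynomial (Fin n) k)) : Prop :=
  ∃ T : Set (Fin n →₀ ℕ), I = Ideal.span ((fun s => (monomial s (1 : k))) '' T)

/-- The multidegree `a` component of `R/I`: the image of the multidegree `a`
component of `R`. -/
def quotientGrSet (I : Ideal (MvPolynomial (Fin n) k)) (a : Fin n → ℤ) :
    Set (MvPolynomial (Fin n) k ⧸ I) :=
  (fun g => Submodule.Quotient.mk g) '' RPieceSet k n a

end Pieces

section Taylor

variable (k n)
variable {r : ℕ} (u : Fin r → (Fin n →₀ ℕ))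

/-- The exponent of the least common multiple of the monomials `x^(u l)`, `l ∈ S`. -/
noncomputable def lcmExp (S : Finset (Fin r)) : Fin n →₀ ℕ :=
  Finsupp.equivFunOnFinite.symm (fun i => S.sup (fun l => u l i))

/-- The `s`-th term of `Hom_R(T_•, ω_R)`, where `T_•` is the Taylor complex (a
`ℤⁿ`-graded free resolution of `R/I`) on the monomial generators `x^(u l)` of `I`:
as a module it is a direct sum of copies of `R` indexed by `s`-subsets of generators. -/
abbrev TaylorDual (s : ℕ) : Type :=
  ∀ _S : {S : Finset (Fin r) // S.card = s}, MvPolynomial (Fin n) k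

/-- The differential of `Hom_R(T_•, ω_R)`: the transpose of the Taylor complex
differential. -/
noncomputable def taylorD (s : ℕ) :
    TaylorDual k n (r := r) s →ₗ[MvPolynomial (Fin n) k] TaylorDual k n (r := r) (s + 1) :=
  LinearMap.pi fun S' : {S : Finset (Fin r) // S.card = s + 1} =>
    ∑ l ∈ S'.1.attach,
      (monomial (lcmExp n u S'.1 - lcmExp n u (S'.1.erase l.1))
          ((-1 : k) ^ ((S'.1.filter (fun x => x < l.1)).card))) •
        (LinearMap.proj (⟨S'.1.erase l.1, by
            rw [Finset.card_erase_of_mem l.2, S'.2]; rfl⟩ :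
              {S : Finset (Fin r) // S.card = s}))

/-- Cocycles of `Hom_R(T_•, ω_R)` in cohomological degree `i`. -/
noncomputable def extZ (i : ℕ) :
    Submodule (MvPolynomial (Fin n) k) (TaylorDual k n (r := r) i) :=
  LinearMap.ker (taylorD k n u i)

/-- Coboundaries of `Hom_R(T_•, ω_R)` in cohomological degree `i`. -/
noncomputable def extB :
    (i : ℕ) → Submodule (MvPolynomial (Fin n) k) (TaylorDual k n (r := r) i)
  | 0 => ⊥
  | (s + 1) => LinearMap.range (taylorD k n u s)

/-- `Ext^i_R(R/I, ω_R)`: the `i`-th cohomology of `Hom_R(T_•, ω_R)`, where `T_•` is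
the Taylor resolution of `R/I` on the monomial generators `x^(u l)` of `I` and
`ω_R = R(-(1,…,1))` is the canonical module. -/
noncomputable def ExtMod (i : ℕ) : Type :=
  extZ k n u i ⧸ (Submodule.comap (extZ k n u i).subtype (extB k n u i ⊓ extZ k n u i))

noncomputable instance (i : ℕ) : AddCommGroup (ExtMod k n u i) :=
  inferInstanceAs (AddCommGroup (extZ k n u i ⧸ _))

noncomputable instance (i : ℕ) : Module (MvPolynomial (Fin n) k) (ExtMod k n u i) :=
  inferInstanceAs (Module (MvPolynomial (Fin n) k) (extZ k n u i ⧸ _))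

noncomputable instance (i : ℕ) : Module k (ExtMod k n u i) :=
  inferInstanceAs (Module k (extZ k n u i ⧸ _))

noncomputable instance (i : ℕ) :
    IsScalarTower k (MvPolynomial (Fin n) k) (ExtMod k n u i) :=
  inferInstanceAs (IsScalarTower k (MvPolynomial (Fin n) k) (extZ k n u i ⧸ _))

/-- The multidegree `a` component of `Hom_R(T_s, ω_R) = ⊕_S Hom_R(R(-lcm_S), R(-(1,…,1)))`:
the component indexed by an `s`-subset `S` must be homogeneous of multidegree
`a + lcm_S - (1,…,1)` in `R`. -/
noncomputable def taylorPiece (s : ℕ) (a : Fin n → ℤ) :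
    Submodule k (TaylorDual k n (r := r) s) :=
  Submodule.pi Set.univ
    (fun S : {S : Finset (Fin r) // S.card = s} =>
      RPiece k n (fun i => a i + (lcmExp n u S.1 i : ℤ) - 1))

/-- The multidegree `a` component of `Ext^i_R(R/I, ω_R)`, i.e. of the `i`-th
cohomology of `Hom_R(T_•, ω_R)`: the image of the multidegree `a` cocycles. -/
noncomputable def extPiece (i : ℕ) (a : Fin n → ℤ) : Submodule k (ExtMod k n u i) :=
  Submodule.map
    ((Submodule.mkQ (Submodule.comap (extZ k n u i).subtype
        (extB k n u i ⊓ extZ k n u i))).restrictScalars k)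
    (Submodule.comap ((extZ k n u i).subtype.restrictScalars k) (taylorPiece k n u i a))

end Taylor

end Paper

set_option linter.unusedSectionVars false
namespace StanleyAux
open Paper MvPolynomial

variable {k : Type} [Field k] {n : ℕ}
variable {M : Type} [AddCommGroup M] [Module (MvPolynomial (Fin n) k) M]
  [Module k M] [IsScalarTower k (MvPolynomial (Fin n) k) M]

lemma mono_smul_mem (gr : (Fin n → ℤ) → Submodule k M)
    (hgr_compat : ∀ (j : Fin n) (a : Fin n → ℤ), ∀ x ∈ gr a,
      (X j : MvPolynomial (Fin n) k) • x ∈ gr (a + eZ n j)) :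
    ∀ (N : ℕ) (u : Fin n →₀ ℕ), (∑ i, u i) = N → ∀ (b : Fin n → ℤ) (x : M), x ∈ gr b →
      (monomial u (1:k) : MvPolynomial (Fin n) k) • x ∈ gr (fun i => b i + (u i : ℤ)) := by
  intro N
  induction N with
  | zero =>
    intro u hu b x hx
    have hu0 : u = 0 := by
      ext i
      have := Finset.sum_eq_zero_iff.mp hu i (Finset.mem_univ i)
      simpa using this
    subst hu0
    have h1 : (monomial (0 : Fin n →₀ ℕ) (1:k) : MvPolynomial (Fin n) k) = 1 := by
      simp [monomial_zero']
    rw [h1, one_smul]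
    convert hx using 2
    simp
  | succ N IH =>
    intro u hu b x hx
    have hex : ∃ l, u l ≠ 0 := by
      by_contra h
      push_neg at h
      simp [h] at hu
    obtain ⟨l, hl⟩ := hex
    set u' : Fin n →₀ ℕ := u - Finsupp.single l 1 with hu'
    have hadd : Finsupp.single l 1 + u' = u := by
      ext i
      simp only [Finsupp.add_apply, hu', Finsupp.tsub_apply, Finsupp.single_apply]
      by_cases h : l = i
      · subst h; simp; omega
      · simp [h]
    have hsum : (∑ i, u' i) = N := by
      have := congrArg (fun v : Fin n →₀ ℕ => ∑ i, v i) hadd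
      simp only [Finsupp.add_apply] at this
      rw [Finset.sum_add_distrib] at this
      have h1 : (∑ i, (Finsupp.single l 1 : Fin n →₀ ℕ) i) = 1 := by
        simp [Finsupp.single_apply]
      omega
    have hmul : (monomial u (1:k) : MvPolynomial (Fin n) k)
        = X l * monomial u' 1 := by
      rw [X, monomial_mul, one_mul, hadd]
    rw [hmul, mul_smul]
    have h2 := IH u' hsum b x hx
    have h3 := hgr_compat l _ _ h2
    convert h3 using 2
    funext i
    simp only [Pi.add_apply, eZ, hu', Finsupp.tsub_apply, Finsupp.single_apply]
    by_cases h : i = l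
    · subst h; simp only [if_pos rfl]
      have : u i ≥ 1 := Nat.one_le_iff_ne_zero.mpr hl
      push_cast [Nat.cast_sub this]
      ring
    · rw [if_neg h, if_neg (fun he => h he.symm)]
      simp

lemma mono_smul_mem' (gr : (Fin n → ℤ) → Submodule k M)
    (hgr_compat : ∀ (j : Fin n) (a : Fin n → ℤ), ∀ x ∈ gr a,
      (X j : MvPolynomial (Fin n) k) • x ∈ gr (a + eZ n j))
    (u : Fin n →₀ ℕ) {b : Fin n → ℤ} {x : M} (hx : x ∈ gr b) :
    (monomial u (1:k) : MvPolynomial (Fin n) k) • x ∈ gr (fun i => b i + (u i : ℤ)) :=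
  mono_smul_mem gr hgr_compat _ u rfl b x hx

noncomputable def grProj (gr : (Fin n → ℤ) → Submodule k M)
    (hgr : DirectSum.IsInternal gr) (a : Fin n → ℤ) : M →ₗ[k] M :=
  (gr a).subtype ∘ₗ (DirectSum.component k (Fin n → ℤ) (fun b => gr b) a) ∘ₗ
    ((LinearEquiv.ofBijective (DirectSum.coeLinearMap gr) hgr).symm :
      M →ₗ[k] DirectSum (Fin n → ℤ) (fun b => (gr b : Type)))

lemma grProj_of_mem (gr : (Fin n → ℤ) → Submodule k M)
    (hgr : DirectSum.IsInternal gr) (a b : Fin n → ℤ) (x : M) (hx : x ∈ gr b) :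
    grProj gr hgr a x = if b = a then x else 0 := by
  classical
  have hsymm : (LinearEquiv.ofBijective (DirectSum.coeLinearMap gr) hgr).symm x
      = DirectSum.lof k (Fin n → ℤ) (fun b => gr b) b ⟨x, hx⟩ := by
    rw [LinearEquiv.symm_apply_eq]
    show x = DirectSum.coeLinearMap gr (DirectSum.lof k (Fin n → ℤ) (fun b => gr b) b ⟨x, hx⟩)
    rw [DirectSum.lof_eq_of, DirectSum.coeLinearMap_of]
  unfold grProj
  simp only [LinearMap.coe_comp, Function.comp_apply, LinearEquiv.coe_coe, hsymm]
  rw [DirectSum.component.of]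
  by_cases h : b = a
  · subst h; simp
  · simp [h]

section Main

variable (k n)

variable (gr : (Fin n → ℤ) → Submodule k M)
variable {p : ℕ} (m : Fin p → M) (G : Fin p → Set (Fin n)) (d : Fin p → (Fin n → ℤ))

/-- The generating set of the Stanley space `k[G i] m i`. -/
def genSet (i : Fin p) : Set M :=
  {x | ∃ u : Fin n →₀ ℕ, ↑u.support ⊆ G i ∧
    x = (monomial u (1 : k) : MvPolynomial (Fin n) k) • m i}

lemma stanleySpan_eq (i : Fin p) :
    stanleySpan k n M (m i) (G i) = Submodule.span k (genSet k n m G i) := rfl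

/-- `k`-span of the first `t` Stanley spaces. -/
def NN (t : ℕ) : Submodule k M :=
  Submodule.span k (⋃ (i : Fin p) (_ : (i : ℕ) < t), genSet k n m G i)

lemma NN_mono {t t' : ℕ} (h : t ≤ t') : NN k n m G t ≤ NN k n m G t' := by
  apply Submodule.span_mono
  refine Set.iUnion_mono fun i => Set.iUnion_subset fun hi => ?_
  exact Set.subset_iUnion (fun _ : (i:ℕ) < t' => genSet k n m G i) (lt_of_lt_of_le hi h)

lemma genSet_subset_NN {i : Fin p} {t : ℕ} (hi : (i:ℕ) < t) :
    genSet k n m G i ⊆ NN k n m G t := fun x hx =>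
  Submodule.subset_span (Set.mem_iUnion.mpr ⟨i, Set.mem_iUnion.mpr ⟨hi, hx⟩⟩)

lemma key (hgr_internal : DirectSum.IsInternal gr)
    (hgr_compat : ∀ (j : Fin n) (a : Fin n → ℤ), ∀ x ∈ gr a,
      (X j : MvPolynomial (Fin n) k) • x ∈ gr (a + eZ n j))
    (hSD : IsStanleyDecomposition k n M m G)
    (hdeg : ∀ i, m i ∈ gr (d i)) (hsf : ∀ i l, d i l ≤ 1)
    (hG : ∀ i, G i = {l | 0 < d i l})
    (hord : ∀ i j : Fin p, i ≤ j → (∑ l, d j l) ≤ (∑ l, d i l))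
    (j : Fin p) (l : Fin n) (hl : l ∉ G j) :
    (X l : MvPolynomial (Fin n) k) • m j ∈ NN k n m G (j : ℕ) := by
  classical
  set a : Fin n → ℤ := d j + eZ n l with ha
  have hxa : (X l : MvPolynomial (Fin n) k) • m j ∈ gr a := hgr_compat l (d j) (m j) (hdeg j)
  have hmem : (X l : MvPolynomial (Fin n) k) • m j ∈ ⨆ i, stanleySpan k n M (m i) (G i) := by
    rw [hSD.2.submodule_iSup_eq_top]; trivial
  obtain ⟨f, hf, hsum⟩ := (Submodule.mem_iSup_iff_exists_finsupp _ _).mp hmem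
  have hproj : ∀ i : Fin p, grProj gr hgr_internal a (f i) ∈ NN k n m G (j:ℕ) := by
    intro i
    have h1 : grProj gr hgr_internal a (f i) ∈
        Submodule.map (grProj gr hgr_internal a) (Submodule.span k (genSet k n m G i)) :=
      Submodule.mem_map_of_mem (hf i)
    rw [Submodule.map_span] at h1
    refine Submodule.span_le.mpr ?_ h1
    rintro y ⟨z, ⟨u, hsupp, rfl⟩, rfl⟩
    have hz : (monomial u (1:k) : MvPolynomial (Fin n) k) • m i
        ∈ gr (fun t => d i t + (u t : ℤ)) :=
      mono_smul_mem' gr hgr_compat u (hdeg i)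
    rw [grProj_of_mem gr hgr_internal a _ _ hz]
    by_cases hcase : (fun t => d i t + (u t:ℤ)) = a
    · rw [if_pos hcase]
      have hij : (i:ℕ) < (j:ℕ) := by
        by_contra hge
        push_neg at hge
        have hji : j ≤ i := Fin.le_def.mpr hge
        have hfun : ∀ t, d i t + (u t : ℤ) = d j t + (if t = l then 1 else 0) := by
          intro t
          have := congrFun hcase t
          simpa [ha, eZ] using this
        by_cases hu : u = 0
        · have hs1 : (∑ t, (d i t + (u t : ℤ))) = ∑ t, (d j t + (if t = l then 1 else 0)) :=
            Finset.sum_congr rfl (fun t _ => hfun t)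
          rw [Finset.sum_add_distrib, Finset.sum_add_distrib] at hs1
          have hu0 : (∑ t, ((u t : ℤ))) = 0 := by simp [hu]
          have hite : (∑ t : Fin n, (if t = l then (1:ℤ) else 0)) = 1 := by
            simp [Finset.sum_ite_eq']
          have hord' := hord j i hji
          omega
        · obtain ⟨t, ht⟩ : ∃ t, u t ≠ 0 := by
            by_contra h; push_neg at h
            exact hu (Finsupp.ext fun t => h t)
          have htG : t ∈ G i := hsupp (Finsupp.mem_support_iff.mpr ht)
          have hdit : 0 < d i t := by rw [hG i] at htG; exact htG
          have h1 : d i t = 1 := le_antisymm (hsf i t) hdit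
          have h2 := hfun t
          have hut : (1:ℤ) ≤ (u t : ℤ) := by exact_mod_cast Nat.one_le_iff_ne_zero.mpr ht
          by_cases htl : t = l
          · subst htl
            have hdj : ¬ 0 < d j t := by rw [hG j] at hl; exact hl
            rw [if_pos rfl] at h2
            omega
          · rw [if_neg htl] at h2
            have := hsf j t
            omega
      exact genSet_subset_NN k n m G hij ⟨u, hsupp, rfl⟩
    · rw [if_neg hcase]; exact zero_mem _
  have hrw : (X l : MvPolynomial (Fin n) k) • m j
      = ∑ i ∈ f.support, grProj gr hgr_internal a (f i) := by
    have h0 : grProj gr hgr_internal a ((X l : MvPolynomial (Fin n) k) • m j)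
        = (X l : MvPolynomial (Fin n) k) • m j := by
      rw [grProj_of_mem gr hgr_internal a a _ hxa, if_pos rfl]
    conv_lhs => rw [← h0, ← hsum]
    rw [Finsupp.sum, map_sum]
  rw [hrw]
  exact Submodule.sum_mem _ fun i _ => hproj i

lemma NN_stable (hgr_internal : DirectSum.IsInternal gr)
    (hgr_compat : ∀ (j : Fin n) (a : Fin n → ℤ), ∀ x ∈ gr a,
      (X j : MvPolynomial (Fin n) k) • x ∈ gr (a + eZ n j))
    (hSD : IsStanleyDecomposition k n M m G)
    (hdeg : ∀ i, m i ∈ gr (d i)) (hsf : ∀ i l, d i l ≤ 1)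
    (hG : ∀ i, G i = {l | 0 < d i l})
    (hord : ∀ i j : Fin p, i ≤ j → (∑ l, d j l) ≤ (∑ l, d i l)) :
    ∀ (t : ℕ) (f : MvPolynomial (Fin n) k) (x : M), x ∈ NN k n m G t → f • x ∈ NN k n m G t := by
  intro t
  induction t using Nat.strong_induction_on with
  | _ t IH =>
    have hX : ∀ (l : Fin n) (x : M), x ∈ NN k n m G t →
        (X l : MvPolynomial (Fin n) k) • x ∈ NN k n m G t := by
      intro l x hx
      refine Submodule.span_induction ?_ ?_ ?_ ?_ hx
      · rintro y hy
        rw [Set.mem_iUnion] at hy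
        obtain ⟨i, hy⟩ := hy
        rw [Set.mem_iUnion] at hy
        obtain ⟨hi, u, hsupp, rfl⟩ := hy
        by_cases hmem : l ∈ G i
        · have heq : (X l : MvPolynomial (Fin n) k) • ((monomial u (1:k) :
              MvPolynomial (Fin n) k) • m i)
              = (monomial (Finsupp.single l 1 + u) (1:k) : MvPolynomial (Fin n) k) • m i := by
            rw [← mul_smul, X, monomial_mul, one_mul]
          rw [heq]
          refine genSet_subset_NN k n m G hi ⟨Finsupp.single l 1 + u, ?_, rfl⟩
          intro t' ht'
          have := Finsupp.support_add ht'
          rw [Finset.mem_union] at this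
          rcases this with h | h
          · have := Finsupp.mem_support_iff.mp h
            have ht'' : t' = l := by
              by_contra hne
              exact this (Finsupp.single_eq_of_ne' (fun he => hne he.symm))
            subst ht''; exact hmem
          · exact hsupp h
        · have heq : (X l : MvPolynomial (Fin n) k) • ((monomial u (1:k) :
              MvPolynomial (Fin n) k) • m i)
              = (monomial u (1:k) : MvPolynomial (Fin n) k) •
                  ((X l : MvPolynomial (Fin n) k) • m i) := by
            rw [← mul_smul, ← mul_smul, mul_comm]
          rw [heq]
          have h2 : (X l : MvPolynomial (Fin n) k) • m i ∈ NN k n m G (i:ℕ) :=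
            key k n gr m G d hgr_internal hgr_compat hSD hdeg hsf hG hord i l hmem
          exact NN_mono k n m G (le_of_lt hi) (IH (i:ℕ) hi _ _ h2)
      · rw [smul_zero]; exact zero_mem _
      · intro y z _ _ hy hz; rw [smul_add]; exact add_mem hy hz
      · intro c y _ hy
        rw [smul_comm]
        exact Submodule.smul_mem _ c hy
    have hmain : ∀ (f : MvPolynomial (Fin n) k), ∀ x ∈ NN k n m G t, f • x ∈ NN k n m G t := by
      intro f
      induction f using MvPolynomial.induction_on with
      | C a =>
        intro x hx
        rw [show (C a : MvPolynomial (Fin n) k) = algebraMap k (MvPolynomial (Fin n) k) a from rfl,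
          algebraMap_smul]
        exact Submodule.smul_mem _ a hx
      | add f g hf hg =>
        intro x hx
        rw [add_smul]
        exact add_mem (hf x hx) (hg x hx)
      | mul_X f l hf =>
        intro x hx
        rw [mul_smul]
        exact hf _ (hX l x hx)
    exact hmain

/-- `NN` as an `R`-submodule, given stability. -/
def NN' (hgr_internal : DirectSum.IsInternal gr)
    (hgr_compat : ∀ (j : Fin n) (a : Fin n → ℤ), ∀ x ∈ gr a,
      (X j : MvPolynomial (Fin n) k) • x ∈ gr (a + eZ n j))
    (hSD : IsStanleyDecomposition k n M m G)
    (hdeg : ∀ i, m i ∈ gr (d i)) (hsf : ∀ i l, d i l ≤ 1)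
    (hG : ∀ i, G i = {l | 0 < d i l})
    (hord : ∀ i j : Fin p, i ≤ j → (∑ l, d j l) ≤ (∑ l, d i l))
    (t : ℕ) : Submodule (MvPolynomial (Fin n) k) M where
  carrier := NN k n m G t
  add_mem' := fun h1 h2 => add_mem h1 h2
  zero_mem' := zero_mem _
  smul_mem' := fun r x hx =>
    NN_stable k n gr m G d hgr_internal hgr_compat hSD hdeg hsf hG hord t r x hx

lemma partialSpan_eq (hgr_internal : DirectSum.IsInternal gr)
    (hgr_compat : ∀ (j : Fin n) (a : Fin n → ℤ), ∀ x ∈ gr a,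
      (X j : MvPolynomial (Fin n) k) • x ∈ gr (a + eZ n j))
    (hSD : IsStanleyDecomposition k n M m G)
    (hdeg : ∀ i, m i ∈ gr (d i)) (hsf : ∀ i l, d i l ≤ 1)
    (hG : ∀ i, G i = {l | 0 < d i l})
    (hord : ∀ i j : Fin p, i ≤ j → (∑ l, d j l) ≤ (∑ l, d i l))
    (t : ℕ) (x : M) :
    x ∈ partialSpan k n M m t ↔ x ∈ NN k n m G t := by
  constructor
  · intro hx
    have hle : partialSpan k n M m t ≤
        NN' k n gr m G d hgr_internal hgr_compat hSD hdeg hsf hG hord t := by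
      rw [partialSpan, Submodule.span_le]
      rintro _ ⟨i, hi, rfl⟩
      have hi' : (i:ℕ) < t := hi
      have hmi : m i ∈ genSet k n m G i :=
        ⟨0, by simp, by rw [monomial_zero', C_1, one_smul]⟩
      exact genSet_subset_NN k n m G hi' hmi
    exact hle hx
  · intro hx
    have hle : NN k n m G t ≤ (partialSpan k n M m t).restrictScalars k := by
      rw [NN, Submodule.span_le]
      rintro _ hy
      rw [Set.mem_iUnion] at hy
      obtain ⟨i, hy⟩ := hy
      rw [Set.mem_iUnion] at hy
      obtain ⟨hi, u, _, rfl⟩ := hy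
      have hmi : m i ∈ partialSpan k n M m t :=
        Submodule.subset_span ⟨i, hi, rfl⟩
      exact Submodule.smul_mem (partialSpan k n M m t) _ hmi
    exact hle hx

lemma indep_zero (hgr_internal : DirectSum.IsInternal gr)
    (hgr_compat : ∀ (j : Fin n) (a : Fin n → ℤ), ∀ x ∈ gr a,
      (X j : MvPolynomial (Fin n) k) • x ∈ gr (a + eZ n j))
    (hSD : IsStanleyDecomposition k n M m G)
    (hdeg : ∀ i, m i ∈ gr (d i))
    (j : Fin p) (g : MvPolynomial (Fin n) k)
    (hsupp : ∀ u ∈ g.support, ↑u.support ⊆ G j)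
    (hmem : g • m j ∈ NN k n m G (j:ℕ)) : g = 0 := by
  classical
  have hrep : g • m j = ∑ u ∈ g.support, coeff u g •
      ((monomial u (1:k) : MvPolynomial (Fin n) k) • m j) := by
    conv_lhs => rw [g.as_sum]
    rw [Finset.sum_smul]
    refine Finset.sum_congr rfl fun u hu => ?_
    rw [show (monomial u (coeff u g) : MvPolynomial (Fin n) k)
        = coeff u g • (monomial u (1:k) : MvPolynomial (Fin n) k) by
      rw [smul_monomial, smul_eq_mul, mul_one], smul_assoc]
  have hstan : g • m j ∈ stanleySpan k n M (m j) (G j) := by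
    rw [hrep, stanleySpan_eq]
    exact Submodule.sum_mem _ fun u hu => Submodule.smul_mem _ _
      (Submodule.subset_span ⟨u, hsupp u hu, rfl⟩)
  have hzero : g • m j = 0 := by
    have hdisj := hSD.2.submodule_iSupIndep j
    have hNle : NN k n m G (j:ℕ) ≤
        ⨆ i, ⨆ (_ : i ≠ j), stanleySpan k n M (m i) (G i) := by
      rw [NN, Submodule.span_le]
      rintro _ hy
      rw [Set.mem_iUnion] at hy
      obtain ⟨i, hy⟩ := hy
      rw [Set.mem_iUnion] at hy
      obtain ⟨hi, hy⟩ := hy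
      have hne : i ≠ j := fun he => by rw [he] at hi; exact lt_irrefl _ hi
      have hle2 : stanleySpan k n M (m i) (G i) ≤
          ⨆ i, ⨆ (_ : i ≠ j), stanleySpan k n M (m i) (G i) := by
        refine le_trans ?_ (le_iSup _ i)
        exact le_iSup (fun _ : i ≠ j => stanleySpan k n M (m i) (G i)) hne
      exact hle2 (Submodule.subset_span hy)
    exact Submodule.disjoint_def.mp hdisj _ hstan (hNle hmem)
  have hcoeff : ∀ u0 ∈ g.support, coeff u0 g = 0 := by
    intro u0 hu0
    have h0 : grProj gr hgr_internal (fun i => d j i + (u0 i : ℤ)) (g • m j) = 0 := by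
      rw [hzero, map_zero]
    rw [hrep, map_sum] at h0
    have hterm : ∀ u ∈ g.support,
        grProj gr hgr_internal (fun i => d j i + (u0 i : ℤ))
          (coeff u g • ((monomial u (1:k) : MvPolynomial (Fin n) k) • m j))
        = if u = u0 then coeff u g • ((monomial u (1:k) : MvPolynomial (Fin n) k) • m j)
          else 0 := by
      intro u _
      have hmemg : coeff u g • ((monomial u (1:k) : MvPolynomial (Fin n) k) • m j)
          ∈ gr (fun i => d j i + (u i : ℤ)) :=
        Submodule.smul_mem _ _ (mono_smul_mem' gr hgr_compat u (hdeg j))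
      rw [grProj_of_mem gr hgr_internal _ _ _ hmemg]
      by_cases hc : u = u0
      · subst hc; rw [if_pos rfl, if_pos rfl]
      · rw [if_neg ?_, if_neg hc]
        intro he
        apply hc
        ext i
        have := congrFun he i
        omega
    rw [Finset.sum_congr rfl hterm, Finset.sum_ite_eq' g.support u0, if_pos hu0] at h0
    rcases smul_eq_zero.mp h0 with h | h
    · exact h
    · exact absurd h (hSD.1 j u0 (hsupp u0 hu0))
  have hs : g.support = ∅ :=
    Finset.eq_empty_of_forall_notMem fun u hu => (mem_support_iff.mp hu) (hcoeff u hu)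
  exact support_eq_empty.mp hs

lemma smul_mem_of_mem_ideal (hgr_internal : DirectSum.IsInternal gr)
    (hgr_compat : ∀ (j : Fin n) (a : Fin n → ℤ), ∀ x ∈ gr a,
      (X j : MvPolynomial (Fin n) k) • x ∈ gr (a + eZ n j))
    (hSD : IsStanleyDecomposition k n M m G)
    (hdeg : ∀ i, m i ∈ gr (d i)) (hsf : ∀ i l, d i l ≤ 1)
    (hG : ∀ i, G i = {l | 0 < d i l})
    (hord : ∀ i j : Fin p, i ≤ j → (∑ l, d j l) ≤ (∑ l, d i l))
    (j : Fin p) (f : MvPolynomial (Fin n) k)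
    (hf : f ∈ Ideal.span {g : MvPolynomial (Fin n) k | ∃ l, l ∉ G j ∧ g = X l}) :
    f • m j ∈ NN k n m G (j:ℕ) := by
  have hle : Ideal.span {g : MvPolynomial (Fin n) k | ∃ l, l ∉ G j ∧ g = X l} ≤
      Submodule.comap
      (LinearMap.toSpanSingleton (MvPolynomial (Fin n) k) M (m j))
      (NN' k n gr m G d hgr_internal hgr_compat hSD hdeg hsf hG hord (j:ℕ)) := by
    rw [Ideal.span_le]
    rintro _ ⟨l, hl, rfl⟩
    exact key k n gr m G d hgr_internal hgr_compat hSD hdeg hsf hG hord j l hl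
  exact hle hf

lemma mem_ideal_of_smul_mem (hgr_internal : DirectSum.IsInternal gr)
    (hgr_compat : ∀ (j : Fin n) (a : Fin n → ℤ), ∀ x ∈ gr a,
      (X j : MvPolynomial (Fin n) k) • x ∈ gr (a + eZ n j))
    (hSD : IsStanleyDecomposition k n M m G)
    (hdeg : ∀ i, m i ∈ gr (d i)) (hsf : ∀ i l, d i l ≤ 1)
    (hG : ∀ i, G i = {l | 0 < d i l})
    (hord : ∀ i j : Fin p, i ≤ j → (∑ l, d j l) ≤ (∑ l, d i l))
    (j : Fin p) (f : MvPolynomial (Fin n) k)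
    (hf : f • m j ∈ NN k n m G (j:ℕ)) :
    f ∈ Ideal.span {g : MvPolynomial (Fin n) k | ∃ l, l ∉ G j ∧ g = X l} := by
  classical
  set I : Ideal (MvPolynomial (Fin n) k) :=
    Ideal.span {g : MvPolynomial (Fin n) k | ∃ l, l ∉ G j ∧ g = X l} with hI
  set g : MvPolynomial (Fin n) k :=
    ∑ u ∈ f.support.filter (fun u => ↑u.support ⊆ G j), monomial u (coeff u f) with hg
  have hIsmul : ∀ h ∈ I, h • m j ∈ NN k n m G (j:ℕ) := by
    intro h hh
    have hle : I ≤ Submodule.comap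
        (LinearMap.toSpanSingleton (MvPolynomial (Fin n) k) M (m j))
        (NN' k n gr m G d hgr_internal hgr_compat hSD hdeg hsf hG hord (j:ℕ)) := by
      rw [hI, Ideal.span_le]
      rintro _ ⟨l, hl, rfl⟩
      exact key k n gr m G d hgr_internal hgr_compat hSD hdeg hsf hG hord j l hl
    exact hle hh
  have hgsupp : ∀ u ∈ g.support, ↑u.support ⊆ G j := by
    intro u hu
    rw [hg] at hu
    have := MvPolynomial.support_sum hu
    rw [Finset.mem_biUnion] at this
    obtain ⟨v, hv, hu2⟩ := this
    have hsub : (monomial v (coeff v f)).support ⊆ {v} := by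
      rw [support_monomial]
      split
      · simp
      · exact Finset.Subset.refl _
    have : u = v := Finset.mem_singleton.mp (hsub hu2)
    subst this
    exact (Finset.mem_filter.mp hv).2
  have hfg : f - g ∈ I := by
    have hsplit : g + (∑ u ∈ f.support.filter (fun u => ¬ ↑u.support ⊆ G j),
        monomial u (coeff u f)) = f := by
      rw [hg, Finset.sum_filter_add_sum_filter_not]
      exact (f.as_sum).symm
    have heq : f - g = ∑ u ∈ f.support.filter (fun u => ¬ ↑u.support ⊆ G j),
        monomial u (coeff u f) := (eq_sub_of_add_eq' hsplit).symm
    rw [heq]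
    refine Submodule.sum_mem _ fun u hu => ?_
    have hnsub : ¬ ↑u.support ⊆ G j := (Finset.mem_filter.mp hu).2
    obtain ⟨l, hl1, hl2⟩ := Set.not_subset.mp hnsub
    have hlsupp : u l ≠ 0 := Finsupp.mem_support_iff.mp hl1
    have hexp : (u - Finsupp.single l 1) + Finsupp.single l 1 = u := by
      ext i
      simp only [Finsupp.coe_add, Pi.add_apply, Finsupp.tsub_apply, Finsupp.single_apply]
      by_cases h : l = i
      · subst h; simp; omega
      · simp [h]
    have hmono : (monomial u (coeff u f) : MvPolynomial (Fin n) k)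
        = monomial (u - Finsupp.single l 1) (coeff u f) * X l := by
      rw [X, monomial_mul, mul_one, hexp]
    rw [hmono]
    exact Ideal.mul_mem_left _ _ (Ideal.subset_span ⟨l, hl2, rfl⟩)
  have hgmem : g • m j ∈ NN k n m G (j:ℕ) := by
    have h1 := hIsmul (f - g) hfg
    have h2 : g • m j = f • m j - (f - g) • m j := by
      rw [sub_smul]; abel
    rw [h2]
    exact sub_mem hf h1
  have hg0 : g = 0 := indep_zero k n gr m G d hgr_internal hgr_compat hSD hdeg j g hgsupp hgmem
  have : f = f - g := by rw [hg0, sub_zero]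
  rw [this]
  exact hfg

end Main

end StanleyAux

open MvPolynomial Paper in
theorem stmt_2 {k : Type} [Field k] {n : ℕ}
    (M : Type) [AddCommGroup M] [Module (MvPolynomial (Fin n) k) M]
    [Module k M] [IsScalarTower k (MvPolynomial (Fin n) k) M]
    [Module.Finite (MvPolynomial (Fin n) k) M]
    -- `gr` is the `ℤⁿ`-grading of `M`
    (gr : (Fin n → ℤ) → Submodule k M)
    (hgr_internal : DirectSum.IsInternal gr)
    (hgr_compat : ∀ (j : Fin n) (a : Fin n → ℤ), ∀ x ∈ gr a,
      (X j : MvPolynomial (Fin n) k) • x ∈ gr (a + eZ n j))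
    -- a Stanley decomposition `{(m i, G i)}` of `M` …
    {p : ℕ} (m : Fin p → M) (G : Fin p → Set (Fin n)) (d : Fin p → (Fin n → ℤ))
    (hSD : IsStanleyDecomposition k n M m G)
    -- … by homogeneous elements `m i` of degree `d i`,
    (hdeg : ∀ i, m i ∈ gr (d i))
    -- with `(d i)⁺` square-free,
    (hsf : ∀ i l, d i l ≤ 1)
    -- `G i = supp ((d i)⁺)`,
    (hG : ∀ i, G i = {l | 0 < d i l})
    -- and the pairs ordered by weakly decreasing total degree:
    (hord : ∀ i j : Fin p, i ≤ j → (∑ l, d j l) ≤ (∑ l, d i l)) :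
    -- Then this ordering makes `S` a Stanley filtration: with
    -- `M⁽ʲ⁾ = R m_1 + ⋯ + R m_j`, for each `j` one has
    -- `M⁽ʲ⁾/M⁽ʲ⁻¹⁾ ≅ k[G j](-d j) = (R/(x_l : l ∉ G j))(-d j)` as `R`-modules,
    -- the free `k[G j]`-module on the class of `m j`:
    ∀ j : Fin p,
      partialSpan k n M m (j : ℕ) ≤ partialSpan k n M m ((j : ℕ) + 1) ∧
      ∃ (hm : m j ∈ partialSpan k n M m ((j : ℕ) + 1))
        (e : (partialSpan k n M m ((j : ℕ) + 1) ⧸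
              Submodule.comap (partialSpan k n M m ((j : ℕ) + 1)).subtype
                (partialSpan k n M m (j : ℕ))) ≃ₗ[MvPolynomial (Fin n) k]
            (MvPolynomial (Fin n) k ⧸
              Ideal.span {f : MvPolynomial (Fin n) k | ∃ l, l ∉ G j ∧ f = X l})),
        e (Submodule.Quotient.mk ⟨m j, hm⟩) =
          Submodule.Quotient.mk (1 : MvPolynomial (Fin n) k) := by
  open StanleyAux in
  classical
  intro j
  have h1 : partialSpan k n M m (j:ℕ) ≤ partialSpan k n M m ((j:ℕ)+1) := by
    apply Submodule.span_mono
    apply Set.image_mono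
    intro i hi
    exact Nat.lt_succ_of_lt hi
  refine ⟨h1, ?_⟩
  have hm : m j ∈ partialSpan k n M m ((j:ℕ)+1) :=
    Submodule.subset_span ⟨j, Nat.lt_succ_self _, rfl⟩
  set I : Ideal (MvPolynomial (Fin n) k) :=
    Ideal.span {f : MvPolynomial (Fin n) k | ∃ l, l ∉ G j ∧ f = X l} with hI
  set P1 : Submodule (MvPolynomial (Fin n) k) M := partialSpan k n M m ((j:ℕ)+1) with hP1
  set P0c : Submodule (MvPolynomial (Fin n) k) P1 :=
    Submodule.comap P1.subtype (partialSpan k n M m (j:ℕ)) with hP0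
  let μ : MvPolynomial (Fin n) k →ₗ[MvPolynomial (Fin n) k] P1 :=
    LinearMap.codRestrict P1 (LinearMap.toSpanSingleton (MvPolynomial (Fin n) k) M (m j))
      (fun f => Submodule.smul_mem _ f hm)
  let φ : MvPolynomial (Fin n) k →ₗ[MvPolynomial (Fin n) k] (P1 ⧸ P0c) := P0c.mkQ ∘ₗ μ
  have hμcoe : ∀ f : MvPolynomial (Fin n) k, ((μ f : P1) : M) = f • m j := fun f => rfl
  have hφ : ∀ f : MvPolynomial (Fin n) k, φ f = Submodule.Quotient.mk (μ f) := fun f => rfl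
  have hsurj : Function.Surjective φ := by
    intro q
    obtain ⟨x, rfl⟩ := Submodule.mkQ_surjective P0c q
    have hx : (x : M) ∈ Submodule.span (MvPolynomial (Fin n) k)
        ((m '' {i : Fin p | (i:ℕ) < (j:ℕ)}) ∪ {m j}) := by
      refine Submodule.span_mono ?_ x.2
      rintro _ ⟨i, hi, rfl⟩
      rcases Nat.lt_succ_iff_lt_or_eq.mp hi with h | h
      · exact Or.inl ⟨i, h, rfl⟩
      · right
        have : i = j := Fin.ext h
        subst this
        rfl
    rw [Submodule.span_union] at hx
    obtain ⟨y, hy, z, hz, hyz⟩ := Submodule.mem_sup.mp hx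
    obtain ⟨f, rfl⟩ := Submodule.mem_span_singleton.mp hz
    refine ⟨f, ?_⟩
    have hsub : μ f - x ∈ P0c := by
      have hcoe : ((μ f - x : P1) : M) = f • m j - (x : M) := by
        rw [Submodule.coe_sub, hμcoe]
      rw [hP0, Submodule.mem_comap, Submodule.subtype_apply, hcoe, ← hyz]
      have habel : (f • m j : M) - (y + f • m j) = -y := by abel
      rw [habel]
      exact neg_mem hy
    have hzero : φ f - Submodule.Quotient.mk x = 0 := by
      have h2 : φ f - Submodule.Quotient.mk x = Submodule.Quotient.mk (μ f - x) := by
        rw [hφ, Submodule.Quotient.mk_sub]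
      rw [h2, Submodule.Quotient.mk_eq_zero]
      exact hsub
    have := sub_eq_zero.mp hzero
    rw [this]
    rfl
  have hker : LinearMap.ker φ = I := by
    ext f
    rw [LinearMap.mem_ker]
    constructor
    · intro h
      have h2 : μ f ∈ P0c := by
        rw [← Submodule.Quotient.mk_eq_zero P0c]
        exact h
      have h3 : f • m j ∈ partialSpan k n M m (j:ℕ) := h2
      exact mem_ideal_of_smul_mem k n gr m G d hgr_internal hgr_compat hSD hdeg hsf hG hord j f
        ((partialSpan_eq k n gr m G d hgr_internal hgr_compat hSD hdeg hsf hG hord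
          (j:ℕ) _).mp h3)
    · intro h
      have h4 := smul_mem_of_mem_ideal k n gr m G d hgr_internal hgr_compat hSD hdeg hsf hG
        hord j f h
      have h5 : f • m j ∈ partialSpan k n M m (j:ℕ) :=
        (partialSpan_eq k n gr m G d hgr_internal hgr_compat hSD hdeg hsf hG hord
          (j:ℕ) _).mpr h4
      have h6 : μ f ∈ P0c := by
        rw [hP0, Submodule.mem_comap]
        exact h5
      rw [hφ, Submodule.Quotient.mk_eq_zero]
      exact h6
  have hIker : I ≤ LinearMap.ker φ := le_of_eq hker.symm
  let ψ := Submodule.liftQ I φ hIker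
  have hψinj : Function.Injective ψ := by
    rw [← LinearMap.ker_eq_bot]
    exact Submodule.ker_liftQ_eq_bot I φ hIker (le_of_eq hker)
  have hψsurj : Function.Surjective ψ := by
    intro q
    obtain ⟨x, hx⟩ := hsurj q
    exact ⟨Submodule.Quotient.mk x, by rw [Submodule.liftQ_apply]; exact hx⟩
  let E := LinearEquiv.ofBijective ψ ⟨hψinj, hψsurj⟩
  refine ⟨hm, E.symm, ?_⟩
  rw [LinearEquiv.symm_apply_eq]
  have h7 : E (Submodule.Quotient.mk 1) = Submodule.Quotient.mk (⟨m j, hm⟩ : P1) := by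
    show ψ (Submodule.Quotient.mk 1) = _
    rw [Submodule.liftQ_apply, hφ]
    congr 1
    exact Subtype.ext (one_smul _ _)
  rw [h7]
end

section
/- Let $I \subseteq R = k[x_1,\ldots,x_n]$ be a monomial ideal, $\mathfrak{m} = (x_1,\ldots,x_n)$, and let $F \subseteq \{1,\ldots,n\}$ and $\mathbf{a} \in \mathbb{Z}^n$ satisfy $\mathrm{supp}(\mathbf{a}^-) = F$. Then for all $i$, the degree-$\mathbf{a}$ component of the local cohomology satisfies $H^i_{\mathfrak{m}}(R/I)_{\mathbf{a}} = H^i(\check{C}_F^\bullet \otimes_R (R/I))_{\mathbf{a}}$, where $\check{C}_F^\bullet$ is the restricted Čech subcomplex supported on subsets containing $F$. -/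
/-!
Common definitions: `ℤⁿ`-graded modules over `R = k[x_1, …, x_n]`, Stanley
decompositions, the Čech complex on `x_1, …, x_n` (computing local cohomology
`H^i_𝔪` and, via the standard characterization, Castelnuovo–Mumford regularity),
and `Ext^i_R(R/I, ω_R)` for a monomial ideal `I`, computed with its natural
`ℤⁿ`-grading from the Taylor complex, which is a graded free resolution of `R/I`
on a chosen set of monomial generators of `I`.
-/

open MvPolynomial

namespace Stmt4Aux

open MvPolynomial Paper

variable {k : Type} [Field k] {n : ℕ}

/-! ### The graded projection on `R` -/

/-- Projection of `R` onto the multidegree `b ∈ ℤⁿ` component. -/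
noncomputable def projZ (k : Type) [Field k] (n : ℕ) (b : Fin n → ℤ) :
    MvPolynomial (Fin n) k →ₗ[k] MvPolynomial (Fin n) k :=
  open Classical in
  if h : ∃ s : Fin n →₀ ℕ, ∀ i, (s i : ℤ) = b i then
    (monomial h.choose).comp (MvPolynomial.lcoeff k h.choose)
  else 0

lemma exists_unique_exp {b : Fin n → ℤ} {s : Fin n →₀ ℕ} (hs : ∀ i, (s i : ℤ) = b i)
    (h : ∃ s : Fin n →₀ ℕ, ∀ i, (s i : ℤ) = b i) : h.choose = s := by
  ext i
  have := h.choose_spec i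
  have := hs i
  omega

lemma projZ_eq (b : Fin n → ℤ) {s : Fin n →₀ ℕ} (hs : ∀ i, (s i : ℤ) = b i)
    (f : MvPolynomial (Fin n) k) :
    projZ k n b f = monomial s (coeff s f) := by
  have h : ∃ s : Fin n →₀ ℕ, ∀ i, (s i : ℤ) = b i := ⟨s, hs⟩
  rw [projZ, dif_pos h, exists_unique_exp hs h]
  rfl

lemma projZ_eq_zero {b : Fin n → ℤ} (hb : ¬ ∃ s : Fin n →₀ ℕ, ∀ i, (s i : ℤ) = b i)
    (f : MvPolynomial (Fin n) k) : projZ k n b f = 0 := by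
  rw [projZ, dif_neg hb]; rfl

lemma projZ_fix (b : Fin n → ℤ) {s : Fin n →₀ ℕ} (hs : ∀ i, (s i : ℤ) = b i) (c : k) :
    projZ k n b (monomial s c) = monomial s c := by
  rw [projZ_eq b hs, coeff_monomial, if_pos rfl]

/-- The key shift lemma. -/
lemma projZ_shift (b : Fin n → ℤ) (p : Fin n →₀ ℕ) (f : MvPolynomial (Fin n) k) :
    projZ k n (fun i => (p i : ℤ) + b i) (monomial p 1 * f)
      = monomial p 1 * projZ k n b f := by
  by_cases h : ∃ s : Fin n →₀ ℕ, ∀ i, (s i : ℤ) = b i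
  · obtain ⟨s, hs⟩ := h
    have hps : ∀ i, (((p + s) : Fin n →₀ ℕ) i : ℤ) = (p i : ℤ) + b i := by
      intro i; simp [hs i]
    rw [projZ_eq _ hps, projZ_eq _ hs, coeff_monomial_mul, one_mul, monomial_mul, one_mul]
  · rw [projZ_eq_zero h, mul_zero]
    by_cases h2 : ∃ t : Fin n →₀ ℕ, ∀ i, (t i : ℤ) = (p i : ℤ) + b i
    · obtain ⟨t, ht⟩ := h2
      have hple : ¬ p ≤ t := by
        intro hle
        refine h ⟨t - p, fun i => ?_⟩
        have h1 := ht i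
        have h2 := Finsupp.le_def.mp hle i
        simp only [Finsupp.tsub_apply]
        omega
      rw [projZ_eq _ ht, coeff_monomial_mul', if_neg hple, map_zero]
    · rw [projZ_eq_zero h2]

/-- Monomial ideals are stable under taking graded components. -/
lemma monomial_coeff_mem {I : Ideal (MvPolynomial (Fin n) k)}
    (hI : IsMonomialIdeal k n I)
    {f : MvPolynomial (Fin n) k} (hf : f ∈ I) (s : Fin n →₀ ℕ) :
    monomial s (coeff s f) ∈ I := by
  classical
  obtain ⟨T, rfl⟩ := hI
  induction hf using Submodule.span_induction generalizing s with
  | mem g hg =>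
    obtain ⟨t, ht, rfl⟩ := hg
    rw [coeff_monomial]
    split_ifs with h
    · subst h; exact Ideal.subset_span ⟨t, ht, rfl⟩
    · rw [map_zero]; exact Ideal.zero_mem _
  | zero => simp only [coeff_zero, map_zero]; exact Ideal.zero_mem _
  | add g h _ _ ihg ihh =>
    rw [coeff_add, map_add]
    exact Ideal.add_mem _ (ihg s) (ihh s)
  | smul r g _ ihg =>
    have : (monomial s (coeff s (r • g)) : MvPolynomial (Fin n) k)
        = ∑ x ∈ Finset.HasAntidiagonal.antidiagonal s, monomial x.1 (coeff x.1 r) * monomial x.2 (coeff x.2 g) := by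
      rw [smul_eq_mul, coeff_mul, map_sum]
      refine Finset.sum_congr rfl fun x hx => ?_
      rw [monomial_mul, (Finset.HasAntidiagonal.mem_antidiagonal.mp hx)]
    rw [this]
    exact Ideal.sum_mem _ fun x _ => Ideal.mul_mem_left _ _ (ihg x.2)

lemma projZ_mem {I : Ideal (MvPolynomial (Fin n) k)} (hI : IsMonomialIdeal k n I)
    (b : Fin n → ℤ) {f : MvPolynomial (Fin n) k} (hf : f ∈ I) : projZ k n b f ∈ I := by
  by_cases h : ∃ s : Fin n →₀ ℕ, ∀ i, (s i : ℤ) = b i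
  · obtain ⟨s, hs⟩ := h
    rw [projZ_eq b hs]
    exact monomial_coeff_mem hI hf s
  · rw [projZ_eq_zero h]
    exact Ideal.zero_mem _

/-! ### The graded projection on `R/I` -/

variable (I : Ideal (MvPolynomial (Fin n) k)) (hI : IsMonomialIdeal k n I)

/-- Projection of `R/I` onto the multidegree `b` component. -/
noncomputable def projM (b : Fin n → ℤ) :
    (MvPolynomial (Fin n) k ⧸ I) →ₗ[k] (MvPolynomial (Fin n) k ⧸ I) :=
  Submodule.mapQ (I.restrictScalars k) (I.restrictScalars k) (projZ k n b)
    (fun _ hf => projZ_mem hI b hf)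

lemma projM_mk (b : Fin n → ℤ) (f : MvPolynomial (Fin n) k) :
    projM I hI b (Submodule.Quotient.mk f)
      = (Submodule.Quotient.mk (projZ k n b f) : MvPolynomial (Fin n) k ⧸ I) := rfl

lemma quot_smul (r f : MvPolynomial (Fin n) k) :
    r • (Submodule.Quotient.mk f : MvPolynomial (Fin n) k ⧸ I)
      = Submodule.Quotient.mk (r * f) := by
  rw [← Submodule.Quotient.mk_smul, smul_eq_mul]

lemma projM_congr {b b' : Fin n → ℤ} (h : ∀ i, b i = b' i) (m : MvPolynomial (Fin n) k ⧸ I) :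
    projM I hI b m = projM I hI b' m := by
  have : b = b' := funext h
  subst this; rfl

lemma projM_shift (b : Fin n → ℤ) (p : Fin n →₀ ℕ) (m : MvPolynomial (Fin n) k ⧸ I) :
    projM I hI (fun i => (p i : ℤ) + b i) ((monomial p 1 : MvPolynomial (Fin n) k) • m)
      = (monomial p 1 : MvPolynomial (Fin n) k) • projM I hI b m := by
  obtain ⟨f, rfl⟩ := Submodule.Quotient.mk_surjective _ m
  rw [quot_smul, projM_mk, projM_mk, quot_smul, projZ_shift]

end Stmt4Aux

namespace Stmt4Aux
open MvPolynomial Paper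

variable {k : Type} [Field k] {n : ℕ}

/-! ### The canonical localization map on `mk` -/

lemma locMap_mk (M : Type) [AddCommGroup M] [Module (MvPolynomial (Fin n) k) M]
    {Λ Λ' : Finset (Fin n)} (h : Λ ⊆ Λ') (m : M) (d : varSubmonoid k n Λ) :
    locMap k n M h (LocalizedModule.mk m d)
      = LocalizedModule.mk m ⟨d.1, varSubmonoid_mono k n h d.2⟩ := by
  rw [locMap, LocalizedModule.lift_mk]
  rw [Module.End.algebraMap_isUnit_inv_apply_eq_iff]
  rw [LocalizedModule.mkLinearMap_apply, LocalizedModule.smul'_mk, LocalizedModule.mk_eq]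
  exact ⟨1, by simp [Submonoid.smul_def]⟩

end Stmt4Aux

namespace Stmt4Aux
open MvPolynomial Paper

variable {k : Type} [Field k] {n : ℕ}

lemma varSubmonoid_mem_iff {Λ : Finset (Fin n)} {g : MvPolynomial (Fin n) k}
    (hg : g ∈ varSubmonoid k n Λ) :
    ∃ s : Fin n →₀ ℕ, ↑s.support ⊆ (Λ : Set (Fin n)) ∧ g = monomial s 1 := by
  induction hg using Submonoid.closure_induction with
  | mem x hx =>
    obtain ⟨i, hi, rfl⟩ := hx
    refine ⟨Finsupp.single i 1, ?_, rfl⟩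
    intro j hj
    simp only [Finset.coe_subset, Finsupp.support_single_ne_zero i one_ne_zero,
      Finset.coe_singleton, Set.mem_singleton_iff] at hj
    subst hj; exact hi
  | one => exact ⟨0, by simp, by simp [monomial_zero']⟩
  | mul x y _ _ ihx ihy =>
    obtain ⟨s, hs, rfl⟩ := ihx
    obtain ⟨t, ht, rfl⟩ := ihy
    refine ⟨s + t, ?_, by rw [monomial_mul, one_mul]⟩
    refine subset_trans ?_ (Set.union_subset hs ht)
    exact_mod_cast Finsupp.support_add

/-- The exponent of an element of `varSubmonoid`. -/
noncomputable def sOf {Λ : Finset (Fin n)} (d : varSubmonoid k n Λ) : Fin n →₀ ℕ :=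
  (varSubmonoid_mem_iff d.2).choose

lemma sOf_spec {Λ : Finset (Fin n)} (d : varSubmonoid k n Λ) :
    ↑(sOf d).support ⊆ (Λ : Set (Fin n)) ∧ (d : MvPolynomial (Fin n) k) = monomial (sOf d) 1 :=
  (varSubmonoid_mem_iff d.2).choose_spec

lemma sOf_eq {Λ : Finset (Fin n)} (d : varSubmonoid k n Λ) {s : Fin n →₀ ℕ}
    (h : (d : MvPolynomial (Fin n) k) = monomial s 1) : sOf d = s := by
  have h2 := (sOf_spec d).2
  rw [h] at h2
  have := (monomial_eq_monomial_iff _ _ _ _).mp h2.symm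
  rcases this with ⟨h1, _⟩ | ⟨h0, _⟩
  · exact h1
  · exact absurd h0 one_ne_zero

/-! ### The degree-`a` projection on the localized modules -/

variable (I : Ideal (MvPolynomial (Fin n) k)) (hI : IsMonomialIdeal k n I)
    (a : Fin n → ℤ)

local notation "Q" => MvPolynomial (Fin n) k ⧸ I

lemma smul_eq_monomial_smul {Λ : Finset (Fin n)} (d : varSubmonoid k n Λ) (m : Q) :
    d • m = (monomial (sOf d) 1 : MvPolynomial (Fin n) k) • m := by
  rw [Submonoid.smul_def, ← (sOf_spec d).2]

lemma smul_smul_eq {Λ : Finset (Fin n)} (u d : varSubmonoid k n Λ) (m : Q) :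
    u • d • m = (monomial (sOf u + sOf d) 1 : MvPolynomial (Fin n) k) • m := by
  rw [Submonoid.smul_def, Submonoid.smul_def, smul_smul, (sOf_spec u).2, (sOf_spec d).2,
    monomial_mul, one_mul]

/-- The underlying function of the projection on `M_{x_Λ}`. -/
noncomputable def PfunAux (Λ : Finset (Fin n)) (p : Q × (varSubmonoid k n Λ)) :
    LocM k n Q Λ :=
  LocalizedModule.mk (projM I hI (fun i => a i + (sOf p.2 i : ℤ)) p.1) p.2

lemma PfunAux_wd (Λ : Finset (Fin n)) (p p' : Q × (varSubmonoid k n Λ)) (hpp : p ≈ p') :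
    PfunAux I hI a Λ p = PfunAux I hI a Λ p' := by
  obtain ⟨m, d⟩ := p
  obtain ⟨m', d'⟩ := p'
  obtain ⟨u, hu⟩ := hpp
  simp only at hu
  rw [smul_smul_eq I u d' m, smul_smul_eq I u d m'] at hu
  rw [PfunAux, PfunAux, LocalizedModule.mk_eq]
  refine ⟨u, ?_⟩
  rw [smul_smul_eq, smul_smul_eq]
  rw [← projM_shift I hI _ (sOf u + sOf d'), ← projM_shift I hI _ (sOf u + sOf d)]
  simp only
  rw [hu]
  apply projM_congr
  intro i
  simp only [Finsupp.coe_add, Pi.add_apply]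
  push_cast
  ring

/-- The degree-`a` projection on `M_{x_Λ}` for `M = R/I`. -/
noncomputable def Pfun (Λ : Finset (Fin n)) (x : LocM k n Q Λ) : LocM k n Q Λ :=
  LocalizedModule.liftOn x (PfunAux I hI a Λ) (PfunAux_wd I hI a Λ)

lemma Pfun_mk (Λ : Finset (Fin n)) (m : Q) (d : varSubmonoid k n Λ) :
    Pfun I hI a Λ (LocalizedModule.mk m d)
      = LocalizedModule.mk (projM I hI (fun i => a i + (sOf d i : ℤ)) m) d :=
  LocalizedModule.liftOn_mk (PfunAux_wd I hI a Λ) m d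

lemma Pfun_zero (Λ : Finset (Fin n)) : Pfun I hI a Λ 0 = 0 := by
  rw [show (0 : LocM k n Q Λ) = LocalizedModule.mk 0 1 from (LocalizedModule.zero_mk 1).symm,
    Pfun_mk, map_zero, LocalizedModule.zero_mk]

lemma Pfun_add (Λ : Finset (Fin n)) (x y : LocM k n Q Λ) :
    Pfun I hI a Λ (x + y) = Pfun I hI a Λ x + Pfun I hI a Λ y := by
  induction x, y using LocalizedModule.induction_on₂ with
  | h m m' d d' =>
    rw [LocalizedModule.mk_add_mk, Pfun_mk, Pfun_mk, Pfun_mk, LocalizedModule.mk_add_mk]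
    congr 1
    · rw [map_add]
      have hdd : sOf (d * d') = sOf d + sOf d' := by
        apply sOf_eq
        rw [Submonoid.coe_mul, (sOf_spec d).2, (sOf_spec d').2, monomial_mul, one_mul]
      congr 1
      · rw [smul_eq_monomial_smul, smul_eq_monomial_smul,
          ← projM_shift I hI (fun i => a i + (sOf d i : ℤ)) (sOf d')]
        apply projM_congr
        intro i
        rw [hdd]
        simp only [Finsupp.coe_add, Pi.add_apply]
        push_cast; ring
      · rw [smul_eq_monomial_smul, smul_eq_monomial_smul,
          ← projM_shift I hI (fun i => a i + (sOf d' i : ℤ)) (sOf d)]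
        apply projM_congr
        intro i
        rw [hdd]
        simp only [Finsupp.coe_add, Pi.add_apply]
        push_cast; ring

/-- The degree-`a` projection as an additive map. -/
noncomputable def PHom (Λ : Finset (Fin n)) : LocM k n Q Λ →+ LocM k n Q Λ where
  toFun := Pfun I hI a Λ
  map_zero' := Pfun_zero I hI a Λ
  map_add' := Pfun_add I hI a Λ

lemma PHom_locMap {Λ Λ' : Finset (Fin n)} (h : Λ ⊆ Λ') (x : LocM k n Q Λ) :
    PHom I hI a Λ' (locMap k n Q h x) = locMap k n Q h (PHom I hI a Λ x) := by
  induction x using LocalizedModule.induction_on with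
  | _ m d =>
    simp only [PHom, AddMonoidHom.coe_mk, ZeroHom.coe_mk]
    rw [locMap_mk, Pfun_mk, Pfun_mk, locMap_mk]
    have : sOf (⟨d.1, varSubmonoid_mono k n h d.2⟩ : varSubmonoid k n Λ') = sOf d := by
      apply sOf_eq
      exact (sOf_spec d).2
    rw [this]

end Stmt4Aux

namespace Stmt4Aux
open MvPolynomial Paper

variable {k : Type} [Field k] {n : ℕ}
variable (I : Ideal (MvPolynomial (Fin n) k)) (hI : IsMonomialIdeal k n I)
    (a : Fin n → ℤ)

local notation "Q" => MvPolynomial (Fin n) k ⧸ I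

/-- When `F ⊄ Λ` and `supp(a⁻) = F`, the degree-`a` part of `(R/I)_{x_Λ}` vanishes. -/
lemma locPiece_eq_bot {F : Finset (Fin n)} (hFa : ∀ l, a l < 0 ↔ l ∈ F)
    {Λ : Finset (Fin n)} (hΛ : ¬ F ⊆ Λ) :
    locPiece k n Q (quotientGrSet k n I) Λ a = ⊥ := by
  rw [locPiece]
  convert AddSubgroup.closure_empty (G := LocM k n Q Λ)
  rw [Set.eq_empty_iff_forall_notMem]
  rintro y ⟨m, b, s, hs, hm, hdeg, rfl⟩
  obtain ⟨l, hlF, hlΛ⟩ := Finset.not_subset.mp hΛ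
  have hsup : ↑(sOf (⟨monomial s 1, hs⟩ : varSubmonoid k n Λ)).support ⊆ (Λ : Set (Fin n)) :=
    (sOf_spec _).1
  rw [sOf_eq _ rfl] at hsup
  have hsl : s l = 0 := by
    by_contra hne
    exact hlΛ (hsup (by exact_mod_cast Finsupp.mem_support_iff.mpr hne))
  have hal : a l < 0 := (hFa l).mpr hlF
  have hbl : b l < 0 := by
    have := hdeg l
    omega
  obtain ⟨g, ⟨c, s', hs', rfl⟩, rfl⟩ := hm
  have := hs' l
  omega

lemma PHom_fix (Λ : Finset (Fin n)) {y : LocM k n Q Λ}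
    (hy : y ∈ locPiece k n Q (quotientGrSet k n I) Λ a) : PHom I hI a Λ y = y := by
  induction hy using AddSubgroup.closure_induction with
  | mem y hy =>
    obtain ⟨m, b, s, hs, hm, hdeg, rfl⟩ := hy
    simp only [PHom, AddMonoidHom.coe_mk, ZeroHom.coe_mk]
    rw [Pfun_mk]
    congr 1
    rw [sOf_eq _ rfl]
    obtain ⟨g, ⟨c, s', hs', rfl⟩, rfl⟩ := hm
    rw [projM_mk]
    congr 1
    apply projZ_fix
    intro i
    have h1 := hs' i
    have h2 := hdeg i
    omega
  | zero => exact (PHom I hI a Λ).map_zero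
  | add x y _ _ ihx ihy => rw [(PHom I hI a Λ).map_add, ihx, ihy]
  | neg x _ ihx => rw [(PHom I hI a Λ).map_neg, ihx]

lemma PHom_mem (Λ : Finset (Fin n)) (y : LocM k n Q Λ) :
    PHom I hI a Λ y ∈ locPiece k n Q (quotientGrSet k n I) Λ a := by
  induction y using LocalizedModule.induction_on with
  | _ m d =>
    simp only [PHom, AddMonoidHom.coe_mk, ZeroHom.coe_mk]
    rw [Pfun_mk]
    obtain ⟨f, rfl⟩ := Submodule.Quotient.mk_surjective _ m
    by_cases h : ∃ s' : Fin n →₀ ℕ, ∀ i, (s' i : ℤ) = a i + (sOf d i : ℤ)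
    · obtain ⟨s', hs'⟩ := h
      rw [projM_mk, projZ_eq _ hs']
      apply AddSubgroup.subset_closure
      have hden : (monomial (sOf d) 1 : MvPolynomial (Fin n) k) ∈ varSubmonoid k n Λ := by
        rw [← (sOf_spec d).2]; exact d.2
      refine ⟨Submodule.Quotient.mk (monomial s' (coeff s' f)), fun i => (s' i : ℤ), sOf d,
        hden, ?_, ?_, ?_⟩
      · exact ⟨monomial s' (coeff s' f), ⟨coeff s' f, s', fun i => rfl, rfl⟩, rfl⟩
      · intro i
        have := hs' i
        simp only
        omega
      · congr 1
        exact Subtype.ext (sOf_spec d).2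
    · rw [projM_mk, projZ_eq_zero h, Submodule.Quotient.mk_zero, LocalizedModule.zero_mk]
      exact AddSubgroup.zero_mem _

/-- The Čech differential, applied componentwise. -/
lemma cechD_apply (M : Type) [AddCommGroup M] [Module (MvPolynomial (Fin n) k) M]
    (j : ℕ) (c : CechTerm k n M j) (Λ' : {S : Finset (Fin n) // S.card = j + 1}) :
    cechD k n M j c Λ' = ∑ l ∈ Λ'.1.attach,
      ((-1 : ℤ) ^ ((Λ'.1.filter (fun x => x < l.1)).card)) •
        locMap k n M (Finset.erase_subset l.1 Λ'.1)
          (c ⟨Λ'.1.erase l.1, by rw [Finset.card_erase_of_mem l.2, Λ'.2]; rfl⟩) := by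
  simp only [cechD, LinearMap.pi_apply, LinearMap.coe_sum, Finset.sum_apply,
    LinearMap.smul_apply, LinearMap.coe_comp, Function.comp_apply, LinearMap.proj_apply]
  exact Finset.sum_congr rfl fun _ _ => rfl

/-- The degree-`a` projection commutes with the Čech differential. -/
lemma cechD_PHom (j : ℕ) (c : CechTerm k n Q j)
    (Λ' : {S : Finset (Fin n) // S.card = j + 1}) :
    cechD k n Q j (fun Λ => PHom I hI a Λ.1 (c Λ)) Λ'
      = PHom I hI a Λ'.1 (cechD k n Q j c Λ') := by
  rw [cechD_apply, cechD_apply, map_sum]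
  refine Finset.sum_congr rfl fun l _ => ?_
  rw [AddMonoidHom.map_zsmul, PHom_locMap]

end Stmt4Aux
set_option synthInstance.maxHeartbeats 1000000 in
set_option maxHeartbeats 1000000 in
open MvPolynomial Paper in
theorem stmt_4 {k : Type} [Field k] {n : ℕ}
    (I : Ideal (MvPolynomial (Fin n) k)) (hI : IsMonomialIdeal k n I)
    (F : Finset (Fin n)) (a : Fin n → ℤ)
    -- `supp (a⁻) = F`:
    (hFa : ∀ l, a l < 0 ↔ l ∈ F) :
    -- Then `H^i_𝔪(R/I)_a = H^i(Č_F ⊗ R/I)_a` for all `i`; that is: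
    -- `Č_F ⊗ R/I` is a subcomplex of the Čech complex `Č ⊗ R/I` (which computes
    -- `H^i_𝔪(R/I)`), …
    (∀ (i : ℕ) (c : CechTerm k n (MvPolynomial (Fin n) k ⧸ I) i),
        c ∈ cechSub k n (MvPolynomial (Fin n) k ⧸ I) F i →
          cechD k n (MvPolynomial (Fin n) k ⧸ I) i c ∈
            cechSub k n (MvPolynomial (Fin n) k ⧸ I) F (i + 1)) ∧
      -- … and the inclusion induces, in multidegree `a`, a surjection on the `i`-th
      -- cohomology (every degree `a` cocycle is cohomologous to one in `Č_F ⊗ R/I`) …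
      (∀ (i : ℕ) (z : CechTerm k n (MvPolynomial (Fin n) k ⧸ I) i),
        z ∈ LinearMap.ker (cechD k n (MvPolynomial (Fin n) k ⧸ I) i) →
          z ∈ cechPiece k n (MvPolynomial (Fin n) k ⧸ I) (quotientGrSet k n I) i a →
            ∃ w : CechTerm k n (MvPolynomial (Fin n) k ⧸ I) i,
              w ∈ cechSub k n (MvPolynomial (Fin n) k ⧸ I) F i ∧
              w ∈ LinearMap.ker (cechD k n (MvPolynomial (Fin n) k ⧸ I) i) ∧
              w ∈ cechPiece k n (MvPolynomial (Fin n) k ⧸ I) (quotientGrSet k n I) i a ∧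
              z - w ∈ cechB k n (MvPolynomial (Fin n) k ⧸ I) i) ∧
      -- … and an injection (a degree `a` cocycle of `Č_F ⊗ R/I` that is a coboundary
      -- in `Č ⊗ R/I` is already a coboundary in `Č_F ⊗ R/I`):
      (∀ (i : ℕ) (w : CechTerm k n (MvPolynomial (Fin n) k ⧸ I) i),
        w ∈ cechSub k n (MvPolynomial (Fin n) k ⧸ I) F i →
          w ∈ LinearMap.ker (cechD k n (MvPolynomial (Fin n) k ⧸ I) i) →
            w ∈ cechPiece k n (MvPolynomial (Fin n) k ⧸ I) (quotientGrSet k n I) i a →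
              w ∈ cechB k n (MvPolynomial (Fin n) k ⧸ I) i →
                w ∈ cechBF k n (MvPolynomial (Fin n) k ⧸ I) F i) := by
  classical
  refine ⟨?_, ?_, ?_⟩
  · -- `Č_F ⊗ R/I` is a subcomplex
    intro i c hc Λ' hΛ'
    rw [Stmt4Aux.cechD_apply]
    apply Finset.sum_eq_zero
    intro l _
    have h0 : c ⟨Λ'.1.erase l.1, by rw [Finset.card_erase_of_mem l.2, Λ'.2]; rfl⟩ = 0 :=
      hc _ (fun hsub => hΛ' (hsub.trans (Finset.erase_subset _ _)))
    rw [h0, map_zero]; exact zsmul_zero _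
  · -- surjectivity on degree-`a` cohomology
    intro i z hz hzp
    refine ⟨z, ?_, hz, hzp, by rw [sub_self]; exact Submodule.zero_mem _⟩
    intro Λ hΛ
    have hmem := hzp Λ
    rw [Stmt4Aux.locPiece_eq_bot I a hFa hΛ] at hmem
    exact AddSubgroup.mem_bot.mp hmem
  · -- injectivity on degree-`a` cohomology
    intro i w hwsub hwker hwp hwB
    cases i with
    | zero => exact hwB
    | succ s =>
      obtain ⟨c, hc⟩ := hwB
      refine ⟨fun Λ => Stmt4Aux.PHom I hI a Λ.1 (c Λ), ?_, ?_⟩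
      · intro Λ hΛ
        have hmem := Stmt4Aux.PHom_mem I hI a Λ.1 (c Λ)
        rw [Stmt4Aux.locPiece_eq_bot I a hFa hΛ] at hmem
        exact AddSubgroup.mem_bot.mp hmem
      · funext Λ'
        rw [Stmt4Aux.cechD_PHom, hc]
        exact Stmt4Aux.PHom_fix I hI a Λ'.1 (hwp Λ')
end

section
/- Let $I \subseteq R = k[x_1,\ldots,x_n]$ be a monomial ideal and $\omega_R = R(-\mathbf{e}_{[n]})$ (the canonical module with its $\mathbb{Z}^n$-grading). Let $\mathbf{a} \in \mathbb{Z}^n$ and let $j \in \mathrm{supp}(\mathbf{a}^+)$ (i.e., $a_j > 0$). Then for every $i$, the multiplication map $x_j : \mathrm{Ext}^i_R(R/I,\omega_R)_{\mathbf{a}} \to \mathrm{Ext}^i_R(R/I,\omega_R)_{\mathbf{a} + \mathbf{e}_j}$ between $\mathbb{Z}^n$-graded components is bijective. -/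
/-!
Common definitions: `ℤⁿ`-graded modules over `R = k[x_1, …, x_n]`, Stanley
decompositions, the Čech complex on `x_1, …, x_n` (computing local cohomology
`H^i_𝔪` and, via the standard characterization, Castelnuovo–Mumford regularity),
and `Ext^i_R(R/I, ω_R)` for a monomial ideal `I`, computed with its natural
`ℤⁿ`-grading from the Taylor complex, which is a graded free resolution of `R/I`
on a chosen set of monomial generators of `I`.
-/

open MvPolynomial

section Helpers

open MvPolynomial Paper

variable {k : Type} [Field k] {n : ℕ}

noncomputable def expOf (c : Fin n → ℤ) : Fin n →₀ ℕ :=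
  Finsupp.equivFunOnFinite.symm fun i => (c i).toNat

lemma expOf_apply (c : Fin n → ℤ) (i : Fin n) : expOf c i = (c i).toNat := rfl

lemma mem_RPiece_monomial {c : Fin n → ℤ} (hc : ∀ i, 0 ≤ c i) (t : k) :
    (monomial (expOf c) t : MvPolynomial (Fin n) k) ∈ RPiece k n c :=
  Submodule.subset_span ⟨t, expOf c,
    fun i => by simp [expOf_apply, Int.toNat_of_nonneg (hc i)], rfl⟩

lemma RPiece_elim {c : Fin n → ℤ} {g : MvPolynomial (Fin n) k} (hg : g ∈ RPiece k n c) :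
    ((∀ i, 0 ≤ c i) ∧ ∃ t : k, g = monomial (expOf c) t) ∨ g = 0 := by
  by_cases hc : ∀ i, 0 ≤ c i
  · left
    refine ⟨hc, ?_⟩
    have hle : RPiece k n c ≤
        LinearMap.range (monomial (expOf c) : k →ₗ[k] MvPolynomial (Fin n) k) := by
      rw [RPiece, Submodule.span_le]
      rintro x ⟨t, s, hs, rfl⟩
      have hsc : s = expOf c := Finsupp.ext fun i => by
        have := hs i; simp only [expOf_apply]; omega
      exact ⟨t, by rw [hsc]⟩
    obtain ⟨t, ht⟩ := hle hg
    exact ⟨t, ht.symm⟩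
  · right
    have hempty : RPieceSet k n c = (∅ : Set (MvPolynomial (Fin n) k)) := by
      ext x
      simp only [RPieceSet, Set.mem_setOf_eq, Set.mem_empty_iff_false, iff_false]
      rintro ⟨t, s, hs, rfl⟩
      exact hc fun i => by have := hs i; omega
    rw [RPiece, hempty, Submodule.span_empty] at hg
    exact hg

lemma X_mul_monomial' (j : Fin n) (s : Fin n →₀ ℕ) (t : k) :
    (X j : MvPolynomial (Fin n) k) * monomial s t = monomial (Finsupp.single j 1 + s) t := by
  rw [X, monomial_mul, one_mul]

lemma eZ_nonneg (j i : Fin n) : 0 ≤ eZ n j i := by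
  unfold eZ; split <;> norm_num

lemma eZ_apply_self (j : Fin n) : eZ n j j = 1 := by simp [eZ]

lemma expOf_add_e {c c' : Fin n → ℤ} (j : Fin n) (hc : ∀ i, c' i = c i + eZ n j i)
    (h0 : ∀ i, 0 ≤ c i) : Finsupp.single j 1 + expOf c = expOf c' :=
  Finsupp.ext fun i => by
    have h1 := hc i
    have h2 := h0 i
    simp only [Finsupp.add_apply, expOf_apply, Finsupp.single_apply, eZ] at *
    by_cases hij : i = j
    · subst hij; rw [if_pos rfl] at h1 ⊢; omega
    · rw [if_neg hij] at h1; rw [if_neg (fun h => hij h.symm)]; omega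

lemma RPiece_X_mul {c c' : Fin n → ℤ} (j : Fin n) (hc : ∀ i, c' i = c i + eZ n j i)
    {g : MvPolynomial (Fin n) k} (hg : g ∈ RPiece k n c) :
    (X j : MvPolynomial (Fin n) k) * g ∈ RPiece k n c' := by
  rcases RPiece_elim hg with ⟨h0, t, rfl⟩ | rfl
  · have h0' : ∀ i, 0 ≤ c' i := fun i => by
      have := eZ_nonneg j i; have := h0 i; have := hc i; omega
    rw [X_mul_monomial', expOf_add_e j hc h0]
    exact mem_RPiece_monomial h0' t
  · simpa using (RPiece k n c').zero_mem

lemma RPiece_X_div {c c' : Fin n → ℤ} (j : Fin n) (hc : ∀ i, c' i = c i + eZ n j i)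
    (hcj : 0 < c' j) {g : MvPolynomial (Fin n) k} (hg : g ∈ RPiece k n c') :
    ∃ h ∈ RPiece k n c, (X j : MvPolynomial (Fin n) k) * h = g := by
  rcases RPiece_elim hg with ⟨h0', t, rfl⟩ | rfl
  · have h0 : ∀ i, 0 ≤ c i := fun i => by
      have h1 := hc i; have h2 := h0' i; have h3 := hc j
      rw [eZ_apply_self] at h3
      by_cases hij : i = j
      · subst hij; omega
      · have : eZ n j i = 0 := by simp [eZ, hij]
        omega
    exact ⟨monomial (expOf c) t, mem_RPiece_monomial h0 t, by
      rw [X_mul_monomial', expOf_add_e j hc h0]⟩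
  · exact ⟨0, (RPiece k n c).zero_mem, by simp⟩

open Classical in
noncomputable def projL (c : Fin n → ℤ) :
    MvPolynomial (Fin n) k →ₗ[k] MvPolynomial (Fin n) k :=
  if (∀ i, 0 ≤ c i) then
    (monomial (expOf c)).comp (lcoeff k (expOf c))
  else 0

lemma projL_pos {c : Fin n → ℤ} (hc : ∀ i, 0 ≤ c i) (p : MvPolynomial (Fin n) k) :
    projL c p = monomial (expOf c) (coeff (expOf c) p) := by
  rw [projL, if_pos hc]; rfl

lemma projL_neg {c : Fin n → ℤ} (hc : ¬ ∀ i, 0 ≤ c i) (p : MvPolynomial (Fin n) k) :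
    projL c p = 0 := by
  rw [projL, if_neg hc]; rfl

lemma projL_mem (c : Fin n → ℤ) (p : MvPolynomial (Fin n) k) :
    projL c p ∈ RPiece k n c := by
  by_cases hc : ∀ i, 0 ≤ c i
  · rw [projL_pos hc]; exact mem_RPiece_monomial hc _
  · rw [projL_neg hc]; exact (RPiece k n c).zero_mem

lemma projL_eq_self {c : Fin n → ℤ} {p : MvPolynomial (Fin n) k}
    (hp : p ∈ RPiece k n c) : projL c p = p := by
  rcases RPiece_elim hp with ⟨h0, t, rfl⟩ | rfl
  · rw [projL_pos h0, coeff_monomial, if_pos rfl]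
  · exact map_zero _

lemma expOf_sub {c c' : Fin n → ℤ} {t : Fin n →₀ ℕ} (h : ∀ i, c' i = c i - (t i : ℤ))
    (hc' : ∀ i, 0 ≤ c' i) : t + expOf c' = expOf c :=
  Finsupp.ext fun i => by
    have := h i; have := hc' i
    simp only [Finsupp.add_apply, expOf_apply]; omega

lemma projL_monomial_mul {c c' : Fin n → ℤ} (t : Fin n →₀ ℕ) (d : k)
    (p : MvPolynomial (Fin n) k) (h : ∀ i, c' i = c i - (t i : ℤ)) :
    projL c (monomial t d * p) = monomial t d * projL c' p := by
  by_cases hc : ∀ i, 0 ≤ c i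
  · by_cases hc' : ∀ i, 0 ≤ c' i
    · have hts : t ≤ expOf c := fun i => by
        have := h i; have := hc i; have := hc' i
        simp only [expOf_apply]; omega
      have hsub : expOf c - t = expOf c' := Finsupp.ext fun i => by
        have := h i; have := hc i; have := hc' i
        simp only [Finsupp.tsub_apply, expOf_apply]; omega
      rw [projL_pos hc, projL_pos hc', coeff_monomial_mul', if_pos hts, hsub,
        monomial_mul, expOf_sub h hc']
    · have hts : ¬ t ≤ expOf c := by
        intro hle
        apply hc'
        intro i
        have := h i; have := hc i; have := hle i
        simp only [expOf_apply] at *; omega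
      rw [projL_pos hc, coeff_monomial_mul', if_neg hts, monomial_zero,
        projL_neg hc', mul_zero]
  · have hc2 : ¬ ∀ i, 0 ≤ c' i := by
      intro hc'
      apply hc
      intro i
      have := h i; have := hc' i
      have : (0:ℤ) ≤ (t i : ℤ) := Int.natCast_nonneg _
      omega
    rw [projL_neg hc, projL_neg hc2, mul_zero]

end Helpers

section TaylorHelpers

open MvPolynomial Paper

variable {k : Type} [Field k] {n : ℕ} {r : ℕ} (u : Fin r → (Fin n →₀ ℕ))

lemma lcmExp_apply (S : Finset (Fin r)) (i : Fin n) :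
    lcmExp n u S i = S.sup (fun l => u l i) := rfl

lemma taylorD_apply (s : ℕ) (w : TaylorDual k n (r := r) s)
    (S' : {S : Finset (Fin r) // S.card = s + 1}) :
    taylorD k n u s w S' =
      ∑ l ∈ S'.1.attach,
        (monomial (lcmExp n u S'.1 - lcmExp n u (S'.1.erase l.1))
          ((-1 : k) ^ ((S'.1.filter (fun x => x < l.1)).card))) *
          w ⟨S'.1.erase l.1, by rw [Finset.card_erase_of_mem l.2, S'.2]; rfl⟩ := by
  rw [taylorD, LinearMap.pi_apply, LinearMap.sum_apply]
  refine Finset.sum_congr rfl fun l _ => ?_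
  rw [LinearMap.smul_apply, LinearMap.proj_apply, smul_eq_mul]

lemma projT_taylorD (s : ℕ) (a : Fin n → ℤ) (w : TaylorDual k n (r := r) s)
    (S' : {S : Finset (Fin r) // S.card = s + 1}) :
    projL (fun i => a i + (lcmExp n u S'.1 i : ℤ) - 1) (taylorD k n u s w S') =
      taylorD k n u s
        (fun S => projL (fun i => a i + (lcmExp n u S.1 i : ℤ) - 1) (w S)) S' := by
  rw [taylorD_apply, taylorD_apply, map_sum]
  refine Finset.sum_congr rfl fun l _ => ?_
  refine projL_monomial_mul _ _ _ (fun i => ?_)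
  have hmono : lcmExp n u (S'.1.erase l.1) i ≤ lcmExp n u S'.1 i := by
    rw [lcmExp_apply, lcmExp_apply]
    exact Finset.sup_mono (Finset.erase_subset _ _)
  rw [Finsupp.tsub_apply]
  dsimp only
  omega

lemma mem_taylorPiece_iff (s : ℕ) (a : Fin n → ℤ) (p : TaylorDual k n (r := r) s) :
    p ∈ taylorPiece k n u s a ↔ ∀ S : {S : Finset (Fin r) // S.card = s},
      p S ∈ RPiece k n (fun i => a i + (lcmExp n u S.1 i : ℤ) - 1) := by
  rw [taylorPiece, Submodule.mem_pi]
  exact ⟨fun h S => h S (Set.mem_univ S), fun h S _ => h S⟩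

lemma degshift (a : Fin n → ℤ) (j : Fin n) (S : Finset (Fin r)) (i : Fin n) :
    (a + eZ n j) i + (lcmExp n u S i : ℤ) - 1
      = (a i + (lcmExp n u S i : ℤ) - 1) + eZ n j i := by
  simp only [Pi.add_apply]; ring

lemma taylorPiece_X_smul (s : ℕ) (a : Fin n → ℤ) (j : Fin n)
    {p : TaylorDual k n (r := r) s} (hp : p ∈ taylorPiece k n u s a) :
    (X j : MvPolynomial (Fin n) k) • p ∈ taylorPiece k n u s (a + eZ n j) := by
  rw [mem_taylorPiece_iff] at hp ⊢
  intro S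
  have := RPiece_X_mul j (degshift u a j S.1) (hp S)
  simpa [Pi.smul_apply, smul_eq_mul] using this

lemma taylorPiece_X_div (s : ℕ) (a : Fin n → ℤ) (j : Fin n) (hj : 0 < a j)
    {q : TaylorDual k n (r := r) s} (hq : q ∈ taylorPiece k n u s (a + eZ n j)) :
    ∃ p ∈ taylorPiece k n u s a, (X j : MvPolynomial (Fin n) k) • p = q := by
  rw [mem_taylorPiece_iff] at hq
  have h : ∀ S : {S : Finset (Fin r) // S.card = s},
      ∃ h ∈ RPiece k n (fun i => a i + (lcmExp n u S.1 i : ℤ) - 1),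
        (X j : MvPolynomial (Fin n) k) * h = q S := fun S => by
    refine RPiece_X_div j (degshift u a j S.1) ?_ (hq S)
    have h1 : (0:ℤ) ≤ (lcmExp n u S.1 j : ℤ) := Int.natCast_nonneg _
    have h2 : eZ n j j = 1 := eZ_apply_self j
    simp only [Pi.add_apply]
    omega
  choose p hp hXp using h
  refine ⟨p, (mem_taylorPiece_iff u s a p).2 hp, funext fun S => ?_⟩
  rw [Pi.smul_apply, smul_eq_mul, hXp S]

lemma X_smul_cancel (j : Fin n) {s : ℕ} {p q : TaylorDual k n (r := r) s}
    (h : (X j : MvPolynomial (Fin n) k) • p = (X j : MvPolynomial (Fin n) k) • q) :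
    p = q :=
  funext fun S => mul_left_cancel₀ (X_ne_zero j) (by
    have := congrFun h S
    simpa [Pi.smul_apply, smul_eq_mul] using this)

lemma extB_step (i : ℕ) (a : Fin n → ℤ) (j : Fin n) (hj : 0 < a j)
    {ζ : TaylorDual k n (r := r) i} (hpiece : ζ ∈ taylorPiece k n u i a)
    (hB : (X j : MvPolynomial (Fin n) k) • ζ ∈ extB k n u i) :
    ζ ∈ extB k n u i := by
  cases i with
  | zero =>
    have hz : (X j : MvPolynomial (Fin n) k) • ζ = 0 := by
      simpa [extB] using hB
    have hζ0 : ζ = 0 := X_smul_cancel j (by rw [hz, smul_zero])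
    rw [hζ0]
    exact Submodule.zero_mem _
  | succ s =>
    have hB' : (X j : MvPolynomial (Fin n) k) • ζ ∈
        LinearMap.range (taylorD k n u s) := hB
    obtain ⟨w, hw⟩ := hB'
    have hcomm : taylorD k n u s
        (fun S => projL (fun i' => (a + eZ n j) i' + (lcmExp n u S.1 i' : ℤ) - 1) (w S))
          = (X j : MvPolynomial (Fin n) k) • ζ := by
      funext S'
      rw [← projT_taylorD, hw]
      exact projL_eq_self
        ((mem_taylorPiece_iff u (s+1) (a + eZ n j) _).1
          (taylorPiece_X_smul u (s+1) a j hpiece) S')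
    have hw'p :
        (fun S => projL (fun i' => (a + eZ n j) i' + (lcmExp n u S.1 i' : ℤ) - 1) (w S))
          ∈ taylorPiece k n u s (a + eZ n j) :=
      (mem_taylorPiece_iff u s (a + eZ n j) _).2 fun S => projL_mem _ _
    obtain ⟨v, hv, hXv⟩ := taylorPiece_X_div u s a j hj hw'p
    refine ⟨v, X_smul_cancel j ?_⟩
    rw [← map_smul, hXv, hcomm]

end TaylorHelpers



set_option synthInstance.maxHeartbeats 1000000 in
set_option maxHeartbeats 1000000 in
open MvPolynomial Paper in
theorem stmt_5 {k : Type} [Field k] {n : ℕ}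
    (I : Ideal (MvPolynomial (Fin n) k)) {r : ℕ} (u : Fin r → (Fin n →₀ ℕ))
    -- `I` is the monomial ideal generated by the monomials `x^(u l)`:
    (hu : I = Ideal.span {g : MvPolynomial (Fin n) k | ∃ l, g = monomial (u l) (1 : k)})
    (a : Fin n → ℤ) (j : Fin n)
    -- `j ∈ supp (a⁺)`:
    (hj : 0 < a j) (i : ℕ) :
    -- Then multiplication by `x j` is a bijection
    -- `Ext^i_R(R/I, ω_R)_a → Ext^i_R(R/I, ω_R)_{a + e j}`
    -- (where `ExtMod k n u i` is `Ext^i_R(R/I, ω_R)`, computed from the Taylor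
    -- resolution of `R/I` on the generators `x^(u l)`, with its natural
    -- `ℤⁿ`-grading `extPiece`); that is, it maps the degree `a` component into the
    -- degree `a + e j` component, …
    (∀ y ∈ extPiece k n u i a,
        (X j : MvPolynomial (Fin n) k) • y ∈ extPiece k n u i (a + eZ n j)) ∧
      -- … injectively …
      (∀ y₁ ∈ extPiece k n u i a, ∀ y₂ ∈ extPiece k n u i a,
        (X j : MvPolynomial (Fin n) k) • y₁ = (X j : MvPolynomial (Fin n) k) • y₂ →
          y₁ = y₂) ∧
      -- … and surjectively:
      (∀ z ∈ extPiece k n u i (a + eZ n j),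
        ∃ y ∈ extPiece k n u i a, (X j : MvPolynomial (Fin n) k) • y = z) := by
  classical
  set N := Submodule.comap (extZ k n u i).subtype (extB k n u i ⊓ extZ k n u i) with hN
  have memPiece : ∀ (b : Fin n → ℤ) (y : ExtMod k n u i),
      y ∈ extPiece k n u i b ↔ ∃ z : extZ k n u i,
        (z : TaylorDual k n (r := r) i) ∈ taylorPiece k n u i b ∧
          Submodule.mkQ N z = y := by
    intro b y
    simp only [extPiece, Submodule.mem_map, Submodule.mem_comap,
      LinearMap.restrictScalars_apply, Submodule.coe_subtype, hN]
    constructor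
    · rintro ⟨z, hz, rfl⟩; exact ⟨z, hz, rfl⟩
    · rintro ⟨z, hz, rfl⟩; exact ⟨z, hz, rfl⟩
  refine ⟨?_, ?_, ?_⟩
  · -- maps into
    intro y hy
    obtain ⟨z, hz, rfl⟩ := (memPiece a y).1 hy
    refine (memPiece _ _).2 ⟨(X j : MvPolynomial (Fin n) k) • z, ?_, ?_⟩
    · have hcoe : ((X j • z : extZ k n u i) : TaylorDual k n (r := r) i)
          = (X j : MvPolynomial (Fin n) k) • (z : TaylorDual k n (r := r) i) :=
        SetLike.val_smul _ _ _
      rw [hcoe]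
      exact taylorPiece_X_smul u i a j hz
    · exact map_smul (Submodule.mkQ N) _ _
  · -- injective
    intro y₁ hy₁ y₂ hy₂ hXy
    obtain ⟨z₁, hz₁, rfl⟩ := (memPiece a y₁).1 hy₁
    obtain ⟨z₂, hz₂, rfl⟩ := (memPiece a y₂).1 hy₂
    have h0 : Submodule.mkQ N ((X j : MvPolynomial (Fin n) k) • (z₁ - z₂)) = 0 := by
      rw [map_smul, map_sub, smul_sub]
      exact sub_eq_zero.mpr hXy
    have hmemN : (X j : MvPolynomial (Fin n) k) • (z₁ - z₂) ∈ N := by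
      rw [Submodule.mkQ_apply] at h0
      exact (Submodule.Quotient.mk_eq_zero N).1 h0
    have hcoe : (((X j : MvPolynomial (Fin n) k) • (z₁ - z₂) : extZ k n u i) :
          TaylorDual k n (r := r) i)
        = (X j : MvPolynomial (Fin n) k) •
            ((z₁ : TaylorDual k n (r := r) i) - (z₂ : TaylorDual k n (r := r) i)) := by
      rw [SetLike.val_smul, AddSubgroupClass.coe_sub]
    have hζB : (X j : MvPolynomial (Fin n) k) •
        ((z₁ : TaylorDual k n (r := r) i) - (z₂ : TaylorDual k n (r := r) i))
          ∈ extB k n u i := by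
      have := (Submodule.mem_comap.1 hmemN).1
      rw [Submodule.coe_subtype, hcoe] at this
      exact this
    have hζpiece : (z₁ : TaylorDual k n (r := r) i) - (z₂ : TaylorDual k n (r := r) i)
        ∈ taylorPiece k n u i a := sub_mem hz₁ hz₂
    have hζB' := extB_step u i a j hj hζpiece hζB
    have hfinal : Submodule.mkQ N (z₁ - z₂) = 0 := by
      rw [Submodule.mkQ_apply]
      refine (Submodule.Quotient.mk_eq_zero N).2 ?_
      refine Submodule.mem_comap.2 ⟨?_, (z₁ - z₂).2⟩
      rw [Submodule.coe_subtype]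
      have hc2 : ((z₁ - z₂ : extZ k n u i) : TaylorDual k n (r := r) i)
          = (z₁ : TaylorDual k n (r := r) i) - (z₂ : TaylorDual k n (r := r) i) := rfl
      rw [hc2]
      exact hζB'
    rw [map_sub, sub_eq_zero] at hfinal
    exact hfinal
  · -- surjective
    intro z hz
    obtain ⟨w, hw, rfl⟩ := (memPiece _ z).1 hz
    obtain ⟨v, hv, hXv⟩ := taylorPiece_X_div u i a j hj hw
    have hvker : v ∈ extZ k n u i := by
      rw [extZ, LinearMap.mem_ker]
      refine X_smul_cancel j (p := taylorD k n u i v) (q := 0) ?_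
      rw [smul_zero, ← map_smul, hXv]
      exact LinearMap.mem_ker.1 w.2
    refine ⟨Submodule.mkQ N ⟨v, hvker⟩, (memPiece _ _).2 ⟨⟨v, hvker⟩, hv, rfl⟩, ?_⟩
    have hmk : Submodule.mkQ N ((X j : MvPolynomial (Fin n) k) • ⟨v, hvker⟩) =
        Submodule.mkQ N w :=
      congrArg (Submodule.mkQ N) (Subtype.ext (by rw [SetLike.val_smul]; exact hXv))
    rw [map_smul] at hmk
    exact hmk
end

section
/- Let $M$ be a finitely generated $\mathbb{Z}^n$-graded module over $R = k[x_1,\ldots,x_n]$ with a Stanley decomposition $\mathcal{S} = \{(m_1,G_1),\ldots,(m_p,G_p)\}$ such that each $(\deg m_i)^+$ is square-free, $G_i = \{x_l : l \in \mathrm{supp}((\deg m_i)^+)\}$, and the pairs are ordered so that $|\deg m_1| \ge \cdots \ge |\deg m_p|$ (total degrees). Then the $k$-span of $\{m_1,\ldots,m_p\}$ in $M$ equals the $k$-span of the set of all homogeneous elements $m \in M$ whose degree has square-free positive part $(\deg m)^+$. -/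
/-!
Common definitions: `ℤⁿ`-graded modules over `R = k[x_1, …, x_n]`, Stanley
decompositions, the Čech complex on `x_1, …, x_n` (computing local cohomology
`H^i_𝔪` and, via the standard characterization, Castelnuovo–Mumford regularity),
and `Ext^i_R(R/I, ω_R)` for a monomial ideal `I`, computed with its natural
`ℤⁿ`-grading from the Taylor complex, which is a graded free resolution of `R/I`
on a chosen set of monomial generators of `I`.
-/

open MvPolynomial

open MvPolynomial Paper in
private lemma stmt7_aux_pow {k : Type} [Field k] {n : ℕ} {M : Type} [AddCommGroup M]
    [Module (MvPolynomial (Fin n) k) M] [Module k M] [IsScalarTower k (MvPolynomial (Fin n) k) M]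
    (gr : (Fin n → ℤ) → Submodule k M)
    (hgr_compat : ∀ (j : Fin n) (a : Fin n → ℤ), ∀ x ∈ gr a,
      (X j : MvPolynomial (Fin n) k) • x ∈ gr (a + eZ n j))
    (j : Fin n) (b : ℕ) :
    ∀ (a : Fin n → ℤ) (x : M), x ∈ gr a →
      ((X j : MvPolynomial (Fin n) k) ^ b) • x ∈ gr (fun l => a l + if l = j then (b : ℤ) else 0) := by
  induction b with
  | zero =>
    intro a x hx
    have : (fun l => a l + if l = j then ((0:ℕ) : ℤ) else 0) = a := by
      funext l; split <;> simp
    rw [this, pow_zero, one_smul]; exact hx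
  | succ b ih =>
    intro a x hx
    have h1 := hgr_compat j _ _ (ih a x hx)
    have : ((fun l => a l + if l = j then (b : ℤ) else 0) + eZ n j)
        = (fun l => a l + if l = j then ((b+1 : ℕ) : ℤ) else 0) := by
      funext l
      simp only [Pi.add_apply, eZ]
      split <;> push_cast <;> ring
    rw [this] at h1
    rwa [pow_succ, mul_comm, mul_smul]

open MvPolynomial Paper in
private lemma stmt7_aux_mono {k : Type} [Field k] {n : ℕ} {M : Type} [AddCommGroup M]
    [Module (MvPolynomial (Fin n) k) M] [Module k M] [IsScalarTower k (MvPolynomial (Fin n) k) M]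
    (gr : (Fin n → ℤ) → Submodule k M)
    (hgr_compat : ∀ (j : Fin n) (a : Fin n → ℤ), ∀ x ∈ gr a,
      (X j : MvPolynomial (Fin n) k) • x ∈ gr (a + eZ n j))
    (u : Fin n →₀ ℕ) :
    ∀ (a : Fin n → ℤ) (x : M), x ∈ gr a →
      (monomial u (1:k) : MvPolynomial (Fin n) k) • x ∈ gr (fun l => a l + (u l : ℤ)) := by
  induction u using Finsupp.induction with
  | zero =>
    intro a x hx
    have : (fun l => a l + ((0 : Fin n →₀ ℕ) l : ℤ)) = a := by funext l; simp
    rw [this]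
    rw [show ((0 : Fin n →₀ ℕ)) = (0 : Fin n →₀ ℕ) from rfl]
    rw [show (monomial (0 : Fin n →₀ ℕ) (1:k) : MvPolynomial (Fin n) k) = 1 by
      simp [MvPolynomial.monomial_zero']]
    rw [one_smul]; exact hx
  | single_add j b f hj hb ih =>
    intro a x hx
    have hmono : (monomial (Finsupp.single j b + f) (1:k) : MvPolynomial (Fin n) k)
        = (X j ^ b) * monomial f (1:k) := by
      rw [X_pow_eq_monomial, monomial_mul, one_mul]
    have h1 := stmt7_aux_pow gr hgr_compat j b _ _ (ih a x hx)
    have heq : (fun l => (a l + (f l : ℤ)) + if l = j then (b : ℤ) else 0)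
        = (fun l => a l + (((Finsupp.single j b + f) l : ℕ) : ℤ)) := by
      funext l
      simp only [Finsupp.add_apply, Finsupp.single_apply]
      by_cases h : l = j
      · subst h; simp; push_cast; ring
      · simp [h, Ne.symm h]
    rw [hmono, mul_smul]
    rw [← heq]
    exact h1

open MvPolynomial Paper in
theorem stmt_7 {k : Type} [Field k] {n : ℕ}
    (M : Type) [AddCommGroup M] [Module (MvPolynomial (Fin n) k) M]
    [Module k M] [IsScalarTower k (MvPolynomial (Fin n) k) M]
    [Module.Finite (MvPolynomial (Fin n) k) M]
    -- `gr` is the `ℤⁿ`-grading of `M`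
    (gr : (Fin n → ℤ) → Submodule k M)
    (hgr_internal : DirectSum.IsInternal gr)
    (hgr_compat : ∀ (j : Fin n) (a : Fin n → ℤ), ∀ x ∈ gr a,
      (X j : MvPolynomial (Fin n) k) • x ∈ gr (a + eZ n j))
    -- a Stanley decomposition `{(m i, G i)}` of `M` …
    {p : ℕ} (m : Fin p → M) (G : Fin p → Set (Fin n)) (d : Fin p → (Fin n → ℤ))
    (hSD : IsStanleyDecomposition k n M m G)
    -- … by homogeneous elements `m i` of degree `d i`,
    (hdeg : ∀ i, m i ∈ gr (d i))
    -- with `(d i)⁺` square-free,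
    (hsf : ∀ i l, d i l ≤ 1)
    -- `G i = supp ((d i)⁺)`,
    (hG : ∀ i, G i = {l | 0 < d i l})
    -- and the pairs ordered by weakly decreasing total degree:
    (hord : ∀ i j : Fin p, i ≤ j → (∑ l, d j l) ≤ (∑ l, d i l)) :
    -- Then the span of the `m i` is the span of all homogeneous elements of `M`
    -- whose degree has square-free positive part:
    Submodule.span k (Set.range m) =
      Submodule.span k {x : M | ∃ a : Fin n → ℤ, (∀ l, a l ≤ 1) ∧ x ∈ gr a} := by
  classical
  apply le_antisymm
  · rw [Submodule.span_le]
    rintro _ ⟨i, rfl⟩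
    exact Submodule.subset_span ⟨d i, hsf i, hdeg i⟩
  · rw [Submodule.span_le]
    rintro x ⟨a, ha, hx⟩
    -- the projection onto the degree `a` component
    set e := LinearEquiv.ofBijective (DirectSum.coeLinearMap gr) hgr_internal with he
    set π : M →ₗ[k] M :=
      (gr a).subtype ∘ₗ (DirectSum.component k (Fin n → ℤ) (fun b => gr b) a)
        ∘ₗ e.symm.toLinearMap with hπ
    have hπ_same : ∀ (y : M), y ∈ gr a → π y = y := by
      intro y hy
      have h2 := hgr_internal.ofBijective_coeLinearMap_of_mem hy
      show (((e.symm y) a : gr a) : M) = y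
      rw [h2]
    have hπ_ne : ∀ (b : Fin n → ℤ) (y : M), b ≠ a → y ∈ gr b → π y = 0 := by
      intro b y hb hy
      have h2 := hgr_internal.ofBijective_coeLinearMap_of_mem_ne hb hy
      show (((e.symm y) a : gr a) : M) = 0
      rw [h2]; rfl
    -- x lies in the span of all `u • m i`
    have hx_top : x ∈ Submodule.span k (⋃ i, {y : M | ∃ u : Fin n →₀ ℕ,
        ↑u.support ⊆ G i ∧ y = (monomial u (1 : k) : MvPolynomial (Fin n) k) • m i}) := by
      rw [Submodule.span_iUnion]
      have := hSD.2.submodule_iSup_eq_top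
      have : (⨆ i, stanleySpan k n M (m i) (G i)) = ⊤ := this
      rw [show (⨆ i, Submodule.span k {y : M | ∃ u : Fin n →₀ ℕ,
          ↑u.support ⊆ G i ∧ y = (monomial u (1 : k) : MvPolynomial (Fin n) k) • m i})
          = ⨆ i, stanleySpan k n M (m i) (G i) from rfl, this]
      trivial
    have hmap := Submodule.mem_map_of_mem (f := π) hx_top
    rw [Submodule.map_span] at hmap
    rw [hπ_same x hx] at hmap
    refine Submodule.span_le.mpr ?_ hmap
    rintro _ ⟨y, hy, rfl⟩
    rcases Set.mem_iUnion.mp hy with ⟨i, u, hu, rfl⟩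
    have hymem : (monomial u (1 : k) : MvPolynomial (Fin n) k) • m i
        ∈ gr (fun l => d i l + (u l : ℤ)) :=
      stmt7_aux_mono gr hgr_compat u (d i) (m i) (hdeg i)
    by_cases hcase : (fun l => d i l + (u l : ℤ)) = a
    · rw [hπ_same _ (hcase ▸ hymem)]
      have hu0 : u = 0 := by
        ext l
        by_contra h
        have hls : l ∈ u.support := Finsupp.mem_support_iff.mpr h
        have hGl : (0 : ℤ) < d i l := by
          have := hu hls
          rwa [hG i] at this
        have h1 : d i l = 1 := le_antisymm (hsf i l) hGl
        have h2 : a l = d i l + (u l : ℤ) := (congrFun hcase l).symm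
        have h3 : 1 ≤ u l := Nat.one_le_iff_ne_zero.mpr h
        have := ha l
        omega
      subst hu0
      rw [show (monomial (0 : Fin n →₀ ℕ) (1:k) : MvPolynomial (Fin n) k) = 1 by
        simp [MvPolynomial.monomial_zero'], one_smul]
      exact Submodule.subset_span ⟨i, rfl⟩
    · rw [hπ_ne _ _ hcase hymem]
      exact Submodule.zero_mem _
end

section
/- Let $M$ be a finitely generated $\mathbb{Z}^n$-graded module over $R = k[x_1,\ldots,x_n]$ with a Stanley decomposition $\mathcal{S} = \{(m_1,G_1),\ldots,(m_p,G_p)\}$ such that each $(\deg m_i)^+$ is square-free, $G_i = \{x_l : l \in \mathrm{supp}((\deg m_i)^+)\}$, and $|\deg m_1| \ge \cdots \ge |\deg m_p|$. Set $M^{(j)} = \sum_{i=1}^j R m_i$ (and $M^{(0)} = 0$). Then for each $j = 1,\ldots,p$, the colon ideal $M^{(j-1)} :_R m_j$ equals the ideal generated by the variables not in $G_j$: $M^{(j-1)} :_R m_j = (x_l : x_l \notin G_j)$. -/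
/-!
Common definitions: `ℤⁿ`-graded modules over `R = k[x_1, …, x_n]`, Stanley
decompositions, the Čech complex on `x_1, …, x_n` (computing local cohomology
`H^i_𝔪` and, via the standard characterization, Castelnuovo–Mumford regularity),
and `Ext^i_R(R/I, ω_R)` for a monomial ideal `I`, computed with its natural
`ℤⁿ`-grading from the Taylor complex, which is a graded free resolution of `R/I`
on a chosen set of monomial generators of `I`.
-/

open MvPolynomial

section StanleyAux

open MvPolynomial Paper

variable {k : Type} [Field k] {n : ℕ}
variable {M : Type} [AddCommGroup M] [Module (MvPolynomial (Fin n) k) M]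
  [Module k M] [IsScalarTower k (MvPolynomial (Fin n) k) M]

private lemma aux_pow_smul (gr : (Fin n → ℤ) → Submodule k M)
    (hgr_compat : ∀ (j : Fin n) (a : Fin n → ℤ), ∀ x ∈ gr a,
      (X j : MvPolynomial (Fin n) k) • x ∈ gr (a + eZ n j))
    (l : Fin n) (b : ℕ) (a : Fin n → ℤ) (x : M) (hx : x ∈ gr a) :
    ((X l : MvPolynomial (Fin n) k) ^ b) • x ∈
      gr (fun i => a i + if i = l then (b : ℤ) else 0) := by
  induction b with
  | zero =>
      have h : (fun i => a i + if i = l then ((0 : ℕ) : ℤ) else 0) = a := by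
        funext i; split <;> simp
      rw [pow_zero, one_smul, h]; exact hx
  | succ b ih =>
      have h := hgr_compat l _ _ ih
      have he : ((fun i => a i + if i = l then ((b : ℕ) : ℤ) else 0) + eZ n l)
          = fun i => a i + if i = l then ((b + 1 : ℕ) : ℤ) else 0 := by
        funext i
        simp only [Pi.add_apply, eZ]
        split <;> push_cast <;> ring
      rw [pow_succ'] at *
      rw [mul_smul]
      rw [he] at h
      exact h

private lemma aux_monomial_smul_mem (gr : (Fin n → ℤ) → Submodule k M)
    (hgr_compat : ∀ (j : Fin n) (a : Fin n → ℤ), ∀ x ∈ gr a,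
      (X j : MvPolynomial (Fin n) k) • x ∈ gr (a + eZ n j))
    (u : Fin n →₀ ℕ) :
    ∀ (a : Fin n → ℤ) (x : M), x ∈ gr a →
      (monomial u (1 : k) : MvPolynomial (Fin n) k) • x ∈
        gr (fun i => a i + (u i : ℤ)) := by
  induction u using Finsupp.induction with
  | zero =>
      intro a x hx
      have h : (fun i => a i + (((0 : Fin n →₀ ℕ)) i : ℤ)) = a := by funext i; simp
      rw [h]
      simpa [MvPolynomial.monomial_zero'] using hx
  | single_add l b v hl hb ih =>
      intro a x hx
      have h1 : (monomial (Finsupp.single l b + v) (1 : k) : MvPolynomial (Fin n) k)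
          = X l ^ b * monomial v 1 := monomial_single_add
      rw [h1, mul_smul]
      have h2 := aux_pow_smul gr hgr_compat l b _ _ (ih a x hx)
      have he : (fun i => (a i + (v i : ℤ)) + if i = l then (b : ℤ) else 0)
          = fun i => a i + (((Finsupp.single l b + v) i : ℕ) : ℤ) := by
        funext i
        rcases eq_or_ne i l with rfl | hi
        · simp only [Finsupp.add_apply, Finsupp.single_eq_same, if_pos rfl]
          push_cast
          ring
        · simp only [Finsupp.add_apply, Finsupp.single_eq_of_ne' (Ne.symm hi), if_neg hi]
          push_cast
          ring
      rw [he] at h2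
      exact h2

private lemma aux_smul_eq_sum (f : MvPolynomial (Fin n) k) (x : M) :
    f • x = ∑ w ∈ f.support, f.coeff w •
      ((monomial w (1 : k) : MvPolynomial (Fin n) k) • x) := by
  conv_lhs => rw [f.as_sum]
  rw [Finset.sum_smul]
  refine Finset.sum_congr rfl fun w _ => ?_
  rw [← smul_assoc, MvPolynomial.smul_monomial, smul_eq_mul, mul_one]

private lemma aux_monomial_factor (w : Fin n →₀ ℕ) (l : Fin n) (h : w l ≠ 0) (c : k) :
    (monomial w c : MvPolynomial (Fin n) k)
      = monomial (w - Finsupp.single l 1) c * X l := by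
  have harg : (w - Finsupp.single l 1) + Finsupp.single l 1 = w := by
    ext i
    rcases eq_or_ne i l with rfl | hi
    · simp only [Finsupp.add_apply, Finsupp.tsub_apply, Finsupp.single_eq_same]
      omega
    · simp [Finsupp.tsub_apply, Finsupp.single_eq_of_ne' (Ne.symm hi)]
  have hX : (X l : MvPolynomial (Fin n) k) = monomial (Finsupp.single l 1) 1 := by
    rw [← pow_one (X l : MvPolynomial (Fin n) k), X_pow_eq_monomial]
  rw [hX, monomial_mul, mul_one, harg]

private lemma aux_clash {p : ℕ} (d : Fin p → Fin n → ℤ)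
    (hsf : ∀ i l, d i l ≤ 1)
    (hord : ∀ i j : Fin p, i ≤ j → (∑ l, d j l) ≤ (∑ l, d i l))
    {j i : Fin p} (hji : j ≤ i) {l : Fin n} (hl : d j l ≤ 0)
    (u : Fin n →₀ ℕ) (hsupp : ∀ l', u l' ≠ 0 → 0 < d i l')
    (heq : ∀ l', d i l' + (u l' : ℤ) = d j l' + eZ n l l') : False := by
  by_cases hu : u = 0
  · subst hu
    have hsum : (∑ l', d i l') = (∑ l', d j l') + 1 := by
      have h : ∀ l', d i l' = d j l' + eZ n l l' := fun l' => by
        have := heq l'; simpa using this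
      calc (∑ l', d i l') = ∑ l', (d j l' + eZ n l l') :=
            Finset.sum_congr rfl (fun l' _ => h l')
        _ = (∑ l', d j l') + ∑ l', eZ n l l' := Finset.sum_add_distrib
        _ = (∑ l', d j l') + 1 := by simp [eZ]
    have := hord j i hji
    omega
  · obtain ⟨l', hl'⟩ : ∃ l', u l' ≠ 0 := by
      by_contra hc; push_neg at hc
      exact hu (Finsupp.ext fun l' => hc l')
    have h1 : 0 < d i l' := hsupp l' hl'
    have h2 : (1 : ℤ) ≤ (u l' : ℤ) := by exact_mod_cast Nat.one_le_iff_ne_zero.mpr hl'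
    have h3 := heq l'
    have h4 : d j l' ≤ 1 := hsf j l'
    rcases eq_or_ne l' l with rfl | hne
    · simp only [eZ, if_pos rfl] at h3; omega
    · simp only [eZ, if_neg hne] at h3; omega

private lemma aux_lemA {p : ℕ} (m : Fin p → M) (G : Fin p → Set (Fin n))
    (d : Fin p → Fin n → ℤ) (gr : (Fin n → ℤ) → Submodule k M)
    (hgr_internal : DirectSum.IsInternal gr)
    (hgr_compat : ∀ (j : Fin n) (a : Fin n → ℤ), ∀ x ∈ gr a,
      (X j : MvPolynomial (Fin n) k) • x ∈ gr (a + eZ n j))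
    (hSD : IsStanleyDecomposition k n M m G)
    (hdeg : ∀ i, m i ∈ gr (d i))
    (hsf : ∀ i l, d i l ≤ 1)
    (hG : ∀ i, G i = {l | 0 < d i l})
    (hord : ∀ i j : Fin p, i ≤ j → (∑ l, d j l) ≤ (∑ l, d i l))
    (j : Fin p) (l : Fin n) (hl : l ∉ G j) :
    (X l : MvPolynomial (Fin n) k) • m j ∈ partialSpan k n M m (j : ℕ) := by
  classical
  set a : Fin n → ℤ := d j + eZ n l with ha
  have hlz : d j l ≤ 0 := by
    rw [hG j] at hl
    simp only [Set.mem_setOf_eq, not_lt] at hl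
    exact hl
  have hx : (X l : MvPolynomial (Fin n) k) • m j ∈ gr a :=
    hgr_compat l (d j) (m j) (hdeg j)
  set Sa : Fin p → Submodule k M := fun i => Submodule.span k
      {x | ∃ u : Fin n →₀ ℕ, ↑u.support ⊆ G i ∧ (∀ i', d i i' + (u i' : ℤ) = a i') ∧
        x = (monomial u (1 : k) : MvPolynomial (Fin n) k) • m i} with hSa
  set Sne : Fin p → Submodule k M := fun i => Submodule.span k
      {x | ∃ u : Fin n →₀ ℕ, ↑u.support ⊆ G i ∧ ¬(∀ i', d i i' + (u i' : ℤ) = a i') ∧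
        x = (monomial u (1 : k) : MvPolynomial (Fin n) k) • m i} with hSne
  have hsplit : ∀ i, stanleySpan k n M (m i) (G i) ≤ Sa i ⊔ Sne i := by
    intro i
    refine Submodule.span_le.mpr ?_
    rintro x ⟨u, hu, rfl⟩
    by_cases hc : ∀ i', d i i' + (u i' : ℤ) = a i'
    · exact Submodule.mem_sup_left (Submodule.subset_span ⟨u, hu, hc, rfl⟩)
    · exact Submodule.mem_sup_right (Submodule.subset_span ⟨u, hu, hc, rfl⟩)
  have hmem : (X l : MvPolynomial (Fin n) k) • m j ∈ (⨆ i, Sa i) ⊔ (⨆ i, Sne i) := by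
    have htop : (⨆ i, stanleySpan k n M (m i) (G i)) = ⊤ := hSD.2.submodule_iSup_eq_top
    have hmem2 : (X l : MvPolynomial (Fin n) k) • m j ∈
        ⨆ i, stanleySpan k n M (m i) (G i) := htop ▸ Submodule.mem_top
    exact (iSup_le fun i => (hsplit i).trans
      (sup_le_sup (le_iSup Sa i) (le_iSup Sne i))) hmem2
  obtain ⟨y, hy, z, hz, hyz⟩ := Submodule.mem_sup.mp hmem
  have hWa : (⨆ i, Sa i) ≤ gr a := by
    refine iSup_le fun i => Submodule.span_le.mpr ?_
    rintro x ⟨u, hu, hdu, rfl⟩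
    have hm := aux_monomial_smul_mem gr hgr_compat u (d i) (m i) (hdeg i)
    have he : (fun i' => d i i' + (u i' : ℤ)) = a := funext hdu
    rwa [he] at hm
  have hVne : (⨆ i, Sne i) ≤ ⨆ (b : Fin n → ℤ) (_ : b ≠ a), gr b := by
    refine iSup_le fun i => Submodule.span_le.mpr ?_
    rintro x ⟨u, hu, hdu, rfl⟩
    have hm := aux_monomial_smul_mem gr hgr_compat u (d i) (m i) (hdeg i)
    have hb : (fun i' => d i i' + (u i' : ℤ)) ≠ a := fun h => hdu (fun i' => congrFun h i')
    exact Submodule.mem_iSup_of_mem _ (Submodule.mem_iSup_of_mem hb hm)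
  have hz0 : z = 0 := by
    have h1 : z ∈ gr a := by
      have hzz : z = (X l : MvPolynomial (Fin n) k) • m j - y := by
        rw [← hyz]; abel
      rw [hzz]
      exact Submodule.sub_mem _ hx (hWa hy)
    exact Submodule.disjoint_def.mp (hgr_internal.submodule_iSupIndep a) z h1 (hVne hz)
  have hxy : (X l : MvPolynomial (Fin n) k) • m j = y := by
    rw [← hyz, hz0, add_zero]
  rw [hxy]
  have hfin : (⨆ i, Sa i) ≤ (partialSpan k n M m (j : ℕ)).restrictScalars k := by
    refine iSup_le fun i => Submodule.span_le.mpr ?_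
    rintro x ⟨u, hu, hdu, rfl⟩
    by_cases hij : (j : ℕ) ≤ (i : ℕ)
    · exfalso
      refine aux_clash d hsf hord (show j ≤ i from hij) hlz u ?_ ?_
      · intro l' hne
        have hmem3 : l' ∈ u.support := Finsupp.mem_support_iff.mpr hne
        have := hu hmem3
        rw [hG i] at this
        exact this
      · intro l'
        have := hdu l'
        simpa [ha, Pi.add_apply] using this
    · push_neg at hij
      have hmi : m i ∈ partialSpan k n M m (j : ℕ) :=
        Submodule.subset_span ⟨i, hij, rfl⟩
      exact Submodule.smul_mem _ _ hmi
  exact hfin hy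

private lemma aux_lemB {p : ℕ} (m : Fin p → M) (G : Fin p → Set (Fin n))
    (d : Fin p → Fin n → ℤ) (gr : (Fin n → ℤ) → Submodule k M)
    (hgr_internal : DirectSum.IsInternal gr)
    (hgr_compat : ∀ (j : Fin n) (a : Fin n → ℤ), ∀ x ∈ gr a,
      (X j : MvPolynomial (Fin n) k) • x ∈ gr (a + eZ n j))
    (hSD : IsStanleyDecomposition k n M m G)
    (hdeg : ∀ i, m i ∈ gr (d i))
    (hsf : ∀ i l, d i l ≤ 1)
    (hG : ∀ i, G i = {l | 0 < d i l})
    (hord : ∀ i j : Fin p, i ≤ j → (∑ l, d j l) ≤ (∑ l, d i l)) :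
    ∀ (N : ℕ) (x : M), x ∈ partialSpan k n M m N →
      x ∈ ⨆ (i : Fin p) (_ : (i : ℕ) < N), stanleySpan k n M (m i) (G i) := by
  classical
  intro N
  induction N with
  | zero =>
      intro x hx
      unfold partialSpan at hx
      have hempty : m '' {i : Fin p | (i : ℕ) < 0} = ∅ := by simp
      rw [hempty, Submodule.span_empty, Submodule.mem_bot] at hx
      exact hx ▸ Submodule.zero_mem _
  | succ N ih =>
      intro x hx
      have hmono : (⨆ (i : Fin p) (_ : (i : ℕ) < N), stanleySpan k n M (m i) (G i)) ≤
          ⨆ (i : Fin p) (_ : (i : ℕ) < N + 1), stanleySpan k n M (m i) (G i) :=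
        iSup₂_le fun i hi => le_iSup₂_of_le i (Nat.lt_succ_of_lt hi) le_rfl
      have hset : {i : Fin p | (i : ℕ) < N + 1}
          = {i : Fin p | (i : ℕ) < N} ∪ {i : Fin p | (i : ℕ) = N} := by
        ext i; simp [Nat.lt_succ_iff_lt_or_eq]; omega
      unfold partialSpan at hx
      rw [hset, Set.image_union, Submodule.span_union] at hx
      obtain ⟨y, hy, z, hz, rfl⟩ := Submodule.mem_sup.mp hx
      have hyT := ih y (by unfold partialSpan; exact hy)
      refine Submodule.add_mem _ (hmono hyT) ?_
      by_cases hN : N < p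
      · set i₀ : Fin p := ⟨N, hN⟩ with hi₀
        have hsingle : {i : Fin p | (i : ℕ) = N} = {i₀} := by
          ext i; simp [hi₀, Fin.ext_iff]
        rw [hsingle, Set.image_singleton] at hz
        obtain ⟨f, rfl⟩ := Submodule.mem_span_singleton.mp hz
        rw [aux_smul_eq_sum]
        refine Submodule.sum_mem _ fun w _ => Submodule.smul_mem _ _ ?_
        by_cases hws : ↑w.support ⊆ G i₀
        · have hmem4 : (monomial w (1 : k) : MvPolynomial (Fin n) k) • m i₀ ∈
              stanleySpan k n M (m i₀) (G i₀) := Submodule.subset_span ⟨w, hws, rfl⟩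
          exact Submodule.mem_iSup_of_mem i₀
            (Submodule.mem_iSup_of_mem (by simp [hi₀]) hmem4)
        · obtain ⟨l, hlw, hlG⟩ := Set.not_subset.mp hws
          have hwl : w l ≠ 0 := Finsupp.mem_support_iff.mp (Finset.mem_coe.mp hlw)
          rw [aux_monomial_factor w l hwl, mul_smul]
          have hXl : (X l : MvPolynomial (Fin n) k) • m i₀ ∈ partialSpan k n M m N := by
            have := aux_lemA m G d gr hgr_internal hgr_compat hSD hdeg hsf hG hord i₀ l hlG
            simpa [hi₀] using this
          have hsm : (monomial (w - Finsupp.single l 1) (1 : k) : MvPolynomial (Fin n) k) •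
              ((X l : MvPolynomial (Fin n) k) • m i₀) ∈ partialSpan k n M m N :=
            Submodule.smul_mem _ _ hXl
          exact hmono (ih _ hsm)
      · have hempty : {i : Fin p | (i : ℕ) = N} = ∅ := by
          ext i
          simp only [Set.mem_setOf_eq, Set.mem_empty_iff_false, iff_false]
          exact fun h => hN (h ▸ i.isLt)
        rw [hempty, Set.image_empty, Submodule.span_empty, Submodule.mem_bot] at hz
        exact hz ▸ Submodule.zero_mem _

end StanleyAux

open MvPolynomial Paper in
theorem stmt_8 {k : Type} [Field k] {n : ℕ}
    (M : Type) [AddCommGroup M] [Module (MvPolynomial (Fin n) k) M]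
    [Module k M] [IsScalarTower k (MvPolynomial (Fin n) k) M]
    [Module.Finite (MvPolynomial (Fin n) k) M]
    -- `gr` is the `ℤⁿ`-grading of `M`
    (gr : (Fin n → ℤ) → Submodule k M)
    (hgr_internal : DirectSum.IsInternal gr)
    (hgr_compat : ∀ (j : Fin n) (a : Fin n → ℤ), ∀ x ∈ gr a,
      (X j : MvPolynomial (Fin n) k) • x ∈ gr (a + eZ n j))
    -- a Stanley decomposition `{(m i, G i)}` of `M` …
    {p : ℕ} (m : Fin p → M) (G : Fin p → Set (Fin n)) (d : Fin p → (Fin n → ℤ))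
    (hSD : IsStanleyDecomposition k n M m G)
    -- … by homogeneous elements `m i` of degree `d i`,
    (hdeg : ∀ i, m i ∈ gr (d i))
    -- with `(d i)⁺` square-free,
    (hsf : ∀ i l, d i l ≤ 1)
    -- `G i = supp ((d i)⁺)`,
    (hG : ∀ i, G i = {l | 0 < d i l})
    -- and the pairs ordered by weakly decreasing total degree:
    (hord : ∀ i j : Fin p, i ≤ j → (∑ l, d j l) ≤ (∑ l, d i l)) :
    -- Then, with `M⁽ʲ⁾ = R m_1 + ⋯ + R m_j`, the colon ideal `M⁽ʲ⁻¹⁾ : m_j` is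
    -- generated by the variables not in `G j`:
    ∀ j : Fin p,
      Submodule.colon (partialSpan k n M m (j : ℕ))
          (Submodule.span (MvPolynomial (Fin n) k) {m j}) =
        Ideal.span {f : MvPolynomial (Fin n) k | ∃ l, l ∉ G j ∧ f = X l} := by
  classical
  have hIle : ∀ j : Fin p,
      Ideal.span {f : MvPolynomial (Fin n) k | ∃ l, l ∉ G j ∧ f = X l} ≤
        Submodule.colon (partialSpan k n M m (j : ℕ))
          (Submodule.span (MvPolynomial (Fin n) k) {m j}) := by
    intro j
    refine Ideal.span_le.mpr ?_
    rintro f ⟨l, hl, rfl⟩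
    rw [SetLike.mem_coe, Submodule.mem_colon]
    intro y hy
    obtain ⟨g, rfl⟩ := Submodule.mem_span_singleton.mp hy
    have hcomm : (X l : MvPolynomial (Fin n) k) • g • m j
        = g • ((X l : MvPolynomial (Fin n) k) • m j) := by
      rw [smul_smul, smul_smul, mul_comm]
    rw [hcomm]
    exact Submodule.smul_mem _ _
      (aux_lemA m G d gr hgr_internal hgr_compat hSD hdeg hsf hG hord j l hl)
  intro j
  refine le_antisymm ?_ (hIle j)
  intro f hf
  have hfm : f • m j ∈ partialSpan k n M m (j : ℕ) :=
    Submodule.mem_colon.mp hf (m j) (Submodule.mem_span_singleton_self _)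
  set A := f.support.filter (fun w => ↑w.support ⊆ G j) with hA
  set fA : MvPolynomial (Fin n) k := ∑ w ∈ A, monomial w (f.coeff w) with hfA
  set fB : MvPolynomial (Fin n) k :=
    ∑ w ∈ f.support.filter (fun w => ¬ (↑w.support ⊆ G j)), monomial w (f.coeff w) with hfB
  have hsplitf : f = fA + fB := by
    conv_lhs => rw [f.as_sum]
    rw [hfA, hfB, hA, Finset.sum_filter_add_sum_filter_not]
  have hBI : fB ∈ Ideal.span {g : MvPolynomial (Fin n) k | ∃ l, l ∉ G j ∧ g = X l} := by
    refine Submodule.sum_mem _ fun w hw => ?_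
    have hw' := (Finset.mem_filter.mp hw).2
    obtain ⟨l, hlw, hlG⟩ := Set.not_subset.mp hw'
    rw [aux_monomial_factor w l (Finsupp.mem_support_iff.mp (Finset.mem_coe.mp hlw))]
    exact Ideal.mul_mem_left _ _ (Ideal.subset_span ⟨l, hlG, rfl⟩)
  have hAm : fA • m j ∈ partialSpan k n M m (j : ℕ) := by
    have h2 : fB • m j ∈ partialSpan k n M m (j : ℕ) :=
      Submodule.mem_colon.mp (hIle j hBI) (m j) (Submodule.mem_span_singleton_self _)
    have h3 : fA • m j = f • m j - fB • m j := by
      rw [hsplitf, add_smul]; abel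
    rw [h3]
    exact Submodule.sub_mem _ hfm h2
  have hAs : fA • m j = ∑ w ∈ A, f.coeff w •
      ((monomial w (1 : k) : MvPolynomial (Fin n) k) • m j) := by
    rw [hfA, Finset.sum_smul]
    refine Finset.sum_congr rfl fun w _ => ?_
    rw [← smul_assoc, MvPolynomial.smul_monomial, smul_eq_mul, mul_one]
  have hzero : fA • m j = 0 := by
    have h1 : fA • m j ∈ stanleySpan k n M (m j) (G j) := by
      rw [hAs]
      refine Submodule.sum_mem _ fun w hw => Submodule.smul_mem _ _ ?_
      exact Submodule.subset_span ⟨w, (Finset.mem_filter.mp hw).2, rfl⟩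
    have h2 : fA • m j ∈ ⨆ (i : Fin p) (_ : i ≠ j), stanleySpan k n M (m i) (G i) := by
      have h3 := aux_lemB m G d gr hgr_internal hgr_compat hSD hdeg hsf hG hord
        (j : ℕ) _ hAm
      have hle : (⨆ (i : Fin p) (_ : (i : ℕ) < (j : ℕ)), stanleySpan k n M (m i) (G i)) ≤
          ⨆ (i : Fin p) (_ : i ≠ j), stanleySpan k n M (m i) (G i) :=
        iSup₂_le fun i hi => le_iSup₂_of_le i
          (by rintro rfl; exact lt_irrefl _ hi) le_rfl
      exact hle h3
    exact Submodule.disjoint_def.mp (hSD.2.submodule_iSupIndep j) _ h1 h2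
  have hAempty : A = ∅ := by
    by_contra hne
    obtain ⟨w0, hw0⟩ := Finset.nonempty_iff_ne_empty.mpr hne
    have hsum0 : ∑ w ∈ A, f.coeff w •
        ((monomial w (1 : k) : MvPolynomial (Fin n) k) • m j) = 0 := by
      rw [← hAs, hzero]
    have hsplit0 : f.coeff w0 • ((monomial w0 (1 : k) : MvPolynomial (Fin n) k) • m j)
        + ∑ w ∈ A.erase w0, f.coeff w •
          ((monomial w (1 : k) : MvPolynomial (Fin n) k) • m j) = 0 :=
      (Finset.add_sum_erase A
        (fun w => f.coeff w • ((monomial w (1 : k) : MvPolynomial (Fin n) k) • m j))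
        hw0).trans hsum0
    have hterm := eq_neg_of_add_eq_zero_left hsplit0
    have hmem1 : f.coeff w0 • ((monomial w0 (1 : k) : MvPolynomial (Fin n) k) • m j)
        ∈ gr (fun i => d j i + (w0 i : ℤ)) :=
      Submodule.smul_mem _ _
        (aux_monomial_smul_mem gr hgr_compat w0 (d j) (m j) (hdeg j))
    have hmem2 : f.coeff w0 • ((monomial w0 (1 : k) : MvPolynomial (Fin n) k) • m j)
        ∈ ⨆ (b : Fin n → ℤ) (_ : b ≠ fun i => d j i + (w0 i : ℤ)), gr b := by
      rw [hterm]
      refine Submodule.neg_mem _ (Submodule.sum_mem _ fun w hw => ?_)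
      have hwne : w ≠ w0 := Finset.ne_of_mem_erase hw
      have hbne : (fun i => d j i + (w i : ℤ)) ≠ fun i => d j i + (w0 i : ℤ) := by
        intro h
        apply hwne
        ext i
        have h2 := congrFun h i
        omega
      exact Submodule.mem_iSup_of_mem _ (Submodule.mem_iSup_of_mem hbne
        (Submodule.smul_mem _ _
          (aux_monomial_smul_mem gr hgr_compat w (d j) (m j) (hdeg j))))
    have h0 : f.coeff w0 • ((monomial w0 (1 : k) : MvPolynomial (Fin n) k) • m j) = 0 :=
      Submodule.disjoint_def.mp
        (hgr_internal.submodule_iSupIndep (fun i => d j i + (w0 i : ℤ))) _ hmem1 hmem2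
    have hc : f.coeff w0 ≠ 0 :=
      MvPolynomial.mem_support_iff.mp (Finset.mem_filter.mp hw0).1
    have hm0 : (monomial w0 (1 : k) : MvPolynomial (Fin n) k) • m j ≠ 0 :=
      hSD.1 j w0 (Finset.mem_filter.mp hw0).2
    apply hm0
    have h5 := congrArg (fun y => (f.coeff w0)⁻¹ • y) h0
    simpa [smul_smul, inv_mul_cancel₀ hc] using h5
  have hfA0 : fA = 0 := by rw [hfA, hAempty, Finset.sum_empty]
  rw [hsplitf, hfA0, zero_add]
  exact hBI
end
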